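/- arXiv:1510.03461 — 4 statements merged into one kernel-verified Lean document; each statement's English description precedes it below -/
import Mathlib

section
/- Let η > 0 be a real, let G be an r-graph on [t], and let x = (x_1,…,x_t) be a weight assignment with x_i ≥ 0 and ∑_i x_i = 1 such that p_G(x) ≥ λ(G) − η. Then there exists i ∈ [t] such that x_i ≥ max_{j∈[t]} x_j − 2·r!·√η and λ_i ≥ max_{j∈[t]} λ_j − 2·r!·√η. -/
open Finset
open scoped BigOperators Classical

abbrev HG := Finset (Finset ℕ)

/-- The vertex set of a hypergraph: union of its edges. -/
def hverts (G : HG) : Finset ℕ := G.sup id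

/-- `G` is `r`-uniform: every edge has `r` vertices. -/
def Uniform (r : ℕ) (G : HG) : Prop := ∀ e ∈ G, e.card = r

/-- The pair `{u,v}` is covered in `G`: some edge contains both. -/
def Covered (G : HG) (u v : ℕ) : Prop := ∃ e ∈ G, u ∈ e ∧ v ∈ e

/-- `G` contains a copy of `F`. -/
def IsCopyIn (F G : HG) : Prop :=
  ∃ φ : ℕ → ℕ, Set.InjOn φ (hverts F : Set ℕ) ∧ ∀ e ∈ F, e.image φ ∈ G

/-- The subgraph of `G` induced by `C`. -/
def induced (G : HG) (C : Finset ℕ) : HG := G.filter (fun e => e ⊆ C)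

/-- `G` contains a member of the family `ℋ^F_p`: there is a core `C` of `p`
vertices such that the subgraph induced by `C` contains a copy of `F` and every
pair of vertices of `C` is covered in `G`. -/
def ContainsHFam (F : HG) (p : ℕ) (G : HG) : Prop :=
  ∃ C : Finset ℕ, C.card = p ∧ IsCopyIn F (induced G C) ∧
    ∀ u ∈ C, ∀ v ∈ C, u ≠ v → Covered G u v

/-- Turán number: maximum number of edges of an `r`-graph on vertex set `[n]`
satisfying the "freeness" predicate `P`. -/
noncomputable def exNum (r n : ℕ) (P : HG → Prop) : ℕ :=
  sSup {m : ℕ | ∃ G : HG, Uniform r G ∧ (∀ e ∈ G, e ⊆ Finset.range n) ∧ P G ∧ G.card = m}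

/-- The Lagrangian polynomial `p_G(x) = r! ∑_{e∈G} ∏_{i∈e} x_i`. -/
noncomputable def pPoly (r : ℕ) (G : HG) (x : ℕ → ℝ) : ℝ :=
  (r.factorial : ℝ) * ∑ e ∈ G, ∏ i ∈ e, x i

/-- The Lagrangian `λ(G)`. -/
noncomputable def lagrangian (r : ℕ) (G : HG) : ℝ :=
  sSup {v : ℝ | ∃ x : ℕ → ℝ, (∀ i, 0 ≤ x i) ∧ (∑ i ∈ hverts G, x i) = 1 ∧ v = pPoly r G x}

/-- The Lagrangian density `π_λ(F)`. -/
noncomputable def piLambda (r : ℕ) (F : HG) : ℝ :=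
  sSup {v : ℝ | ∃ G : HG, Uniform r G ∧ ¬ IsCopyIn F G ∧ v = lagrangian r G}

/-- `G` is `m`-partite. -/
def MPartite (m : ℕ) (G : HG) : Prop :=
  ∃ f : ℕ → Fin m, ∀ e ∈ G, ∀ u ∈ e, ∀ v ∈ e, u ≠ v → f u ≠ f v

/-- `ℋ^F_{m+1}` is `m`-stable. -/
def MStable (r m : ℕ) (F : HG) : Prop :=
  ∀ ε : ℝ, 0 < ε → ∃ δ : ℝ, 0 < δ ∧ ∃ n₁ : ℕ, ∀ n : ℕ, n₁ ≤ n →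
    ∀ G : HG, Uniform r G → (∀ e ∈ G, e ⊆ Finset.range n) →
      ¬ ContainsHFam F (m + 1) G →
      ((m.descFactorial r : ℝ) / (m : ℝ) ^ r - δ) * (n.choose r : ℝ) < (G.card : ℝ) →
      ∃ Z : Finset ℕ, (Z.card : ℝ) ≤ ε * n ∧
        MPartite m (G.filter (fun e => Disjoint e Z))

/-- Pairs of vertices of `C` not covered in `F`. -/
def uncovPairs (F : HG) (C : Finset ℕ) : Finset (Finset ℕ) :=
  (C.powersetCard 2).filter (fun s => ¬ ∃ e ∈ F, s ⊆ e)

/-- `H` is an expanded `p`-clique with an embedded `F` (i.e. a copy of `H^F_p`). -/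
def IsExpandedClique (r : ℕ) (F : HG) (p : ℕ) (H : HG) : Prop :=
  ∃ C : Finset ℕ, hverts F ⊆ C ∧ C.card = p ∧
    ∃ B : Finset ℕ → Finset ℕ,
      (∀ s ∈ uncovPairs F C, (B s).card = r - 2 ∧ Disjoint (B s) C) ∧
      (∀ s ∈ uncovPairs F C, ∀ t ∈ uncovPairs F C, s ≠ t → Disjoint (B s) (B t)) ∧
      H = F ∪ (uncovPairs F C).image (fun s => s ∪ B s)

/-- The balanced complete `m`-partite `r`-graph `T_r(n,m)` on vertex set `[n]`,
with parts the residue classes modulo `m`. -/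
def turanGraph (r n m : ℕ) : HG :=
  ((Finset.range n).powersetCard r).filter
    (fun e => ∀ u ∈ e, ∀ v ∈ e, u ≠ v → u % m ≠ v % m)

/-- `F` has a vertex of degree 1. -/
def HasDeg1Vertex (F : HG) : Prop :=
  ∃ v ∈ hverts F, (F.filter (fun e => v ∈ e)).card = 1

/-- `T` is a tree on `k` vertices (a connected 2-graph with `k-1` edges). -/
def IsTreeGraph (T : HG) (k : ℕ) : Prop :=
  Uniform 2 T ∧ (hverts T).card = k ∧ T.card + 1 = k ∧
    ∀ u ∈ hverts T, ∀ v ∈ hverts T,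
      Relation.ReflTransGen (fun a b => ({a, b} : Finset ℕ) ∈ T) u v

/-- The `k`-vertex tree `T` satisfies the Erdős–Sós conjecture:
`ex(n,T) ≤ n(k-2)/2` for all `n`. -/
def SatisfiesES (T : HG) (k : ℕ) : Prop :=
  ∀ n : ℕ, 2 * exNum 2 n (fun G => ¬ IsCopyIn T G) ≤ n * (k - 2)

/-- The function `f_r(x) = (∏_{i=1}^{r-1} (x+i-2)) / (x+r-3)^r`. -/
noncomputable def frf (r : ℕ) (x : ℝ) : ℝ :=
  (∏ i ∈ Finset.Icc 1 (r - 1), (x + (i : ℝ) - 2)) / (x + (r : ℝ) - 3) ^ r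

/-- `M` is the rightmost maximum of `f_r` on `[2,∞)`. -/
def IsRightmostMax (r : ℕ) (M : ℝ) : Prop :=
  2 ≤ M ∧ (∀ y : ℝ, 2 ≤ y → frf r y ≤ frf r M) ∧
    (∀ y : ℝ, 2 ≤ y → frf r y = frf r M → y ≤ M)

/-- `F` is the `(r-2)`-fold enlargement of the 2-graph `T`. -/
def IsEnlargement (r : ℕ) (T F : HG) : Prop :=
  ∃ D : Finset ℕ, D.card = r - 2 ∧ Disjoint D (hverts T) ∧ F = T.image (fun e => e ∪ D)

/-- The link of a vertex `i` in `G`. -/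
def link (G : HG) (i : ℕ) : HG := (G.filter (fun e => i ∈ e)).image (fun e => e.erase i)

/-- `λ_i = ∂p_G(x)/∂x_i = r! ∑_{f ∈ L_G(i)} ∏_{j∈f} x_j`. -/
noncomputable def lamI (r : ℕ) (G : HG) (x : ℕ → ℝ) (i : ℕ) : ℝ :=
  (r.factorial : ℝ) * ∑ f ∈ link G i, ∏ j ∈ f, x j

/-- `G` is a blowup of `L`. -/
def IsBlowup (L G : HG) : Prop :=
  ∃ V : ℕ → Finset ℕ,
    (∀ i ∈ hverts L, ∀ j ∈ hverts L, i ≠ j → Disjoint (V i) (V j)) ∧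
    ∀ e : Finset ℕ, e ∈ G ↔ ∃ f ∈ L, ∃ φ : ℕ → ℕ, (∀ i ∈ f, φ i ∈ V i) ∧ e = f.image φ

/-- `G` contains an `s`-sunflower with kernel `D`. -/
def HasSunflower (G : HG) (D : Finset ℕ) (s : ℕ) : Prop :=
  ∃ S : Finset (Finset ℕ), S ⊆ G ∧ S.card = s ∧ (∀ A ∈ S, D ⊆ A) ∧
    ∀ A ∈ S, ∀ B ∈ S, A ≠ B → A ∩ B = D

/-- `F` covers pairs: every pair of vertices of `F` lies in some edge. -/
def CoversPairs (F : HG) : Prop :=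
  ∀ u ∈ hverts F, ∀ v ∈ hverts F, u ≠ v → Covered F u v

/-- `d(G)`: the maximum average degree among nonempty subgraphs of `G`. -/
noncomputable def maxAvgDeg (G : HG) : ℝ :=
  sSup {v : ℝ | ∃ H : HG, H ⊆ G ∧ H.Nonempty ∧ v = 2 * (H.card : ℝ) / ((hverts H).card : ℝ)}

/-- Symmetrizing `v` to `u`: remove all edges containing `v` and replace them
with `{D ∪ {v} : D ∈ L_G(u)}`. -/
def symmetrize (G : HG) (u v : ℕ) : HG :=
  G.filter (fun e => v ∉ e) ∪ (G.filter (fun e => u ∈ e)).image (fun e => insert v (e.erase u))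

/-- The noncomplete transversals of an `m`-partite `r`-graph `L` with parts `A`. -/
noncomputable def noncompTrans (r m : ℕ) (L : HG) (A : Fin m → Finset ℕ) : Finset (Finset ℕ) :=
  ((Finset.univ.biUnion A).powerset).filter
    (fun S => (∀ i, (S ∩ A i).card = 1) ∧ ∃ e : Finset ℕ, e ⊆ S ∧ e.card = r ∧ e ∉ L)

lemma aux_sum_prod_le (x : ℕ → ℝ) (hx : ∀ i, 0 ≤ x i) :
    ∀ (k : ℕ) (𝒢 : Finset (Finset ℕ)) (S : Finset ℕ),
      (∀ g ∈ 𝒢, g.card = k) → (∀ g ∈ 𝒢, g ⊆ S) →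
      ∑ g ∈ 𝒢, ∏ u ∈ g, x u ≤ (∑ u ∈ S, x u) ^ k := by
  intro k
  induction k with
  | zero =>
    intro 𝒢 S hc hs
    have : 𝒢 ⊆ {∅} := by
      intro g hg
      simp [Finset.card_eq_zero.mp (hc g hg)]
    rcases Finset.subset_singleton_iff.mp this with h | h <;> simp [h]
  | succ k ih =>
    intro 𝒢 S hc hs
    have hne : ∀ g ∈ 𝒢, g.Nonempty := fun g hg =>
      Finset.card_pos.mp (by rw [hc g hg]; exact Nat.succ_pos k)
    set m : Finset ℕ → ℕ := fun A => if h : A.Nonempty then A.min' h else 0 with hm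
    have hmmem : ∀ g ∈ 𝒢, m g ∈ g := by
      intro g hg
      simp only [hm, dif_pos (hne g hg)]
      exact Finset.min'_mem g (hne g hg)
    have hmaps : ∀ g ∈ 𝒢, m g ∈ S := fun g hg => hs g hg (hmmem g hg)
    rw [← Finset.sum_fiberwise_of_maps_to hmaps (fun g => ∏ u ∈ g, x u)]
    have key : ∀ u ∈ S, ∑ g ∈ 𝒢.filter (fun g => m g = u), ∏ v ∈ g, x v
        ≤ x u * (∑ v ∈ S, x v) ^ k := by
      intro u hu
      have h1 : ∀ g ∈ 𝒢.filter (fun g => m g = u), ∏ v ∈ g, x v = x u * ∏ v ∈ g.erase u, x v := by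
        intro g hg
        rw [Finset.mem_filter] at hg
        rw [Finset.mul_prod_erase g x (hg.2 ▸ hmmem g hg.1)]
      rw [Finset.sum_congr rfl h1, ← Finset.mul_sum]
      have hinj : ∀ g₁ ∈ 𝒢.filter (fun g => m g = u), ∀ g₂ ∈ 𝒢.filter (fun g => m g = u),
          g₁.erase u = g₂.erase u → g₁ = g₂ := by
        intro g₁ hg₁ g₂ hg₂ h
        rw [Finset.mem_filter] at hg₁ hg₂
        have h₁ : u ∈ g₁ := hg₁.2 ▸ hmmem g₁ hg₁.1
        have h₂ : u ∈ g₂ := hg₂.2 ▸ hmmem g₂ hg₂.1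
        rw [← Finset.insert_erase h₁, ← Finset.insert_erase h₂, h]
      have := Finset.sum_image (f := fun h => ∏ v ∈ h, x v) hinj
      rw [← this]
      have hbound : ∑ h ∈ (𝒢.filter (fun g => m g = u)).image (fun g => g.erase u), ∏ v ∈ h, x v
          ≤ (∑ v ∈ S, x v) ^ k := by
        apply ih
        · intro h hh
          rw [Finset.mem_image] at hh
          obtain ⟨g, hg, rfl⟩ := hh
          rw [Finset.mem_filter] at hg
          rw [Finset.card_erase_of_mem (hg.2 ▸ hmmem g hg.1), hc g hg.1]
          rfl
        · intro h hh
          rw [Finset.mem_image] at hh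
          obtain ⟨g, hg, rfl⟩ := hh
          rw [Finset.mem_filter] at hg
          exact (Finset.erase_subset u g).trans (hs g hg.1)
      exact mul_le_mul_of_nonneg_left hbound (hx u)
    calc ∑ u ∈ S, ∑ g ∈ 𝒢.filter (fun g => m g = u), ∏ v ∈ g, x v
        ≤ ∑ u ∈ S, x u * (∑ v ∈ S, x v) ^ k := Finset.sum_le_sum key
      _ = (∑ u ∈ S, x u) ^ (k + 1) := by rw [← Finset.sum_mul]; ring


lemma aux_edge_sub (G : HG) {e : Finset ℕ} (he : e ∈ G) : e ⊆ hverts G :=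
  Finset.le_sup (f := id) he

lemma aux_le_lagrangian (r t : ℕ) (hr : 0 < r) (G : HG) (hG : Uniform r G)
    (hGt : hverts G ⊆ Finset.range t) (y : ℕ → ℝ) (hy0 : ∀ i, 0 ≤ y i)
    (hy1 : (∑ i ∈ Finset.range t, y i) = 1) : pPoly r G y ≤ lagrangian r G := by
  rcases eq_or_ne G ∅ with rfl | hGne
  · have h1 : pPoly r ∅ y = 0 := by simp [pPoly]
    have h2 : {v : ℝ | ∃ x : ℕ → ℝ, (∀ i, 0 ≤ x i) ∧ (∑ i ∈ hverts (∅:HG), x i) = 1 ∧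
        v = pPoly r ∅ x} = ∅ := by
      ext v
      simp [hverts]
    rw [h1, lagrangian, h2, Real.sSup_empty]
  · obtain ⟨e0, he0⟩ := Finset.nonempty_iff_ne_empty.mpr hGne
    have he0ne : e0.Nonempty := Finset.card_pos.mp (by rw [hG e0 he0]; exact hr)
    obtain ⟨v0, hv0⟩ := he0ne
    have hv0' : v0 ∈ hverts G := aux_edge_sub G he0 hv0
    set c : ℝ := 1 - ∑ i ∈ hverts G, y i with hc
    have hc0 : 0 ≤ c := by
      have := Finset.sum_le_sum_of_subset_of_nonneg hGt (fun i _ _ => hy0 i)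
      rw [hy1] at this
      linarith
    set y' : ℕ → ℝ := fun u => y u + (if u = v0 then c else 0) with hy'
    have hy'0 : ∀ i, 0 ≤ y' i := by
      intro i
      simp only [hy']
      split <;> [linarith [hy0 i]; simpa using hy0 i]
    have hy'1 : (∑ i ∈ hverts G, y' i) = 1 := by
      simp only [hy', Finset.sum_add_distrib, Finset.sum_ite_eq' (hverts G) v0 (fun _ => c),
        if_pos hv0']
      ring
    have hmono : pPoly r G y ≤ pPoly r G y' := by
      apply mul_le_mul_of_nonneg_left _ (by positivity)
      apply Finset.sum_le_sum
      intro e _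
      apply Finset.prod_le_prod (fun i _ => hy0 i)
      intro i _
      simp only [hy']
      split <;> [linarith; simp]
    have hbdd : BddAbove {v : ℝ | ∃ x : ℕ → ℝ, (∀ i, 0 ≤ x i) ∧
        (∑ i ∈ hverts G, x i) = 1 ∧ v = pPoly r G x} := by
      refine ⟨(r.factorial : ℝ) * G.card, ?_⟩
      rintro v ⟨z, hz0, hz1, rfl⟩
      have : ∑ e ∈ G, ∏ i ∈ e, z i ≤ (G.card : ℝ) := by
        calc ∑ e ∈ G, ∏ i ∈ e, z i ≤ ∑ e ∈ G, 1 := by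
              apply Finset.sum_le_sum
              intro e he
              apply Finset.prod_le_one (fun i _ => hz0 i)
              intro i hi
              calc z i ≤ ∑ u ∈ hverts G, z u :=
                    Finset.single_le_sum (fun u _ => hz0 u) (aux_edge_sub G he hi)
                _ = 1 := hz1
          _ = (G.card : ℝ) := by simp
      unfold pPoly
      have hf : (0:ℝ) ≤ (r.factorial : ℝ) := by positivity
      nlinarith
    have hmem : pPoly r G y' ∈ {v : ℝ | ∃ x : ℕ → ℝ, (∀ i, 0 ≤ x i) ∧
        (∑ i ∈ hverts G, x i) = 1 ∧ v = pPoly r G x} := ⟨y', hy'0, hy'1, rfl⟩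
    exact hmono.trans (le_csSup hbdd hmem)

lemma aux_lamI_eq (r : ℕ) (G : HG) (x : ℕ → ℝ) (j : ℕ) :
    lamI r G x j = (r.factorial : ℝ) *
      ∑ e ∈ G, (if j ∈ e then ∏ u ∈ e.erase j, x u else 0) := by
  unfold lamI link
  congr 1
  rw [Finset.sum_image (fun e₁ he₁ e₂ he₂ h => by
    rw [Finset.mem_coe, Finset.mem_filter] at he₁ he₂
    rw [← Finset.insert_erase he₁.2, ← Finset.insert_erase he₂.2, h])]
  rw [Finset.sum_filter]

lemma aux_shift (r : ℕ) (G : HG) (x : ℕ → ℝ) (i j : ℕ) (hij : i ≠ j) (s : ℝ) :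
    pPoly r G (fun u => x u + (if u = i then -s else 0) + (if u = j then s else 0)) =
      pPoly r G x + s * (lamI r G x j - lamI r G x i) -
        s ^ 2 * ((r.factorial : ℝ) *
          ∑ e ∈ G, (if i ∈ e ∧ j ∈ e then ∏ u ∈ (e.erase i).erase j, x u else 0)) := by
  set y : ℕ → ℝ := fun u => x u + (if u = i then -s else 0) + (if u = j then s else 0) with hy
  have hedge : ∀ e ∈ G, ∏ u ∈ e, y u = ∏ u ∈ e, x u
      + s * ((if j ∈ e then ∏ u ∈ e.erase j, x u else 0)
           - (if i ∈ e then ∏ u ∈ e.erase i, x u else 0))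
      - s ^ 2 * (if i ∈ e ∧ j ∈ e then ∏ u ∈ (e.erase i).erase j, x u else 0) := by
    intro e _
    by_cases hi : i ∈ e <;> by_cases hj : j ∈ e
    · -- both in e
      have hji : j ∈ e.erase i := Finset.mem_erase.mpr ⟨hij.symm, hj⟩
      have h1 : ∏ u ∈ e, y u = y i * (y j * ∏ u ∈ (e.erase i).erase j, y u) := by
        rw [Finset.mul_prod_erase _ y hji, Finset.mul_prod_erase _ y hi]
      have h2 : ∏ u ∈ (e.erase i).erase j, y u = ∏ u ∈ (e.erase i).erase j, x u := by
        apply Finset.prod_congr rfl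
        intro u hu
        rw [Finset.mem_erase] at hu
        have hu2 := Finset.mem_erase.mp hu.2
        simp [hy, hu.1, hu2.1]
      have h3 : ∏ u ∈ e, x u = x i * (x j * ∏ u ∈ (e.erase i).erase j, x u) := by
        rw [Finset.mul_prod_erase _ x hji, Finset.mul_prod_erase _ x hi]
      have h4 : ∏ u ∈ e.erase j, x u = x i * ∏ u ∈ (e.erase j).erase i, x u := by
        rw [Finset.mul_prod_erase _ x (Finset.mem_erase.mpr ⟨hij, hi⟩)]
      have h5 : ∏ u ∈ e.erase i, x u = x j * ∏ u ∈ (e.erase i).erase j, x u := by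
        rw [Finset.mul_prod_erase _ x hji]
      have h6 : (e.erase j).erase i = (e.erase i).erase j := Finset.erase_right_comm
      have hyi : y i = x i - s := by simp [hy, hij, sub_eq_add_neg]
      have hyj : y j = x j + s := by simp [hy, hij.symm]
      rw [h1, h2, hyi, hyj, if_pos hj, if_pos hi, if_pos ⟨hi, hj⟩, h3, h4, h5, h6]
      ring
    · -- i only
      have h1 : ∏ u ∈ e, y u = y i * ∏ u ∈ e.erase i, y u := (Finset.mul_prod_erase _ y hi).symm
      have h2 : ∏ u ∈ e.erase i, y u = ∏ u ∈ e.erase i, x u := by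
        apply Finset.prod_congr rfl
        intro u hu
        rw [Finset.mem_erase] at hu
        have : u ≠ j := fun h => hj (h ▸ hu.2)
        simp [hy, hu.1, this]
      have h3 : ∏ u ∈ e, x u = x i * ∏ u ∈ e.erase i, x u := (Finset.mul_prod_erase _ x hi).symm
      have hyi : y i = x i - s := by simp [hy, hij, sub_eq_add_neg]
      rw [h1, h2, hyi, if_neg hj, if_pos hi, if_neg (fun h => hj h.2), h3]
      ring
    · -- j only
      have h1 : ∏ u ∈ e, y u = y j * ∏ u ∈ e.erase j, y u := (Finset.mul_prod_erase _ y hj).symm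
      have h2 : ∏ u ∈ e.erase j, y u = ∏ u ∈ e.erase j, x u := by
        apply Finset.prod_congr rfl
        intro u hu
        rw [Finset.mem_erase] at hu
        have : u ≠ i := fun h => hi (h ▸ hu.2)
        simp [hy, hu.1, this]
      have h3 : ∏ u ∈ e, x u = x j * ∏ u ∈ e.erase j, x u := (Finset.mul_prod_erase _ x hj).symm
      have hyj : y j = x j + s := by simp [hy, hij.symm]
      rw [h1, h2, hyj, if_pos hj, if_neg hi, if_neg (fun h => hi h.1), h3]
      ring
    · -- neither
      have h2 : ∏ u ∈ e, y u = ∏ u ∈ e, x u := by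
        apply Finset.prod_congr rfl
        intro u hu
        have h1 : u ≠ i := fun h => hi (h ▸ hu)
        have h2 : u ≠ j := fun h => hj (h ▸ hu)
        simp [hy, h1, h2]
      rw [h2, if_neg hj, if_neg hi, if_neg (fun h => hi h.1)]
      ring
  unfold pPoly
  rw [Finset.sum_congr rfl hedge]
  rw [aux_lamI_eq r G x j, aux_lamI_eq r G x i]
  rw [Finset.sum_sub_distrib, Finset.sum_add_distrib, ← Finset.mul_sum, ← Finset.mul_sum,
    Finset.sum_sub_distrib]
  ring

/-- Near-optimal weightings have a vertex of near-maximum weight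
and near-maximum partial derivative. -/
theorem stmt_14 (r t : ℕ) (hr : 0 < r) (η : ℝ) (hη : 0 < η)
    (G : HG) (hG : Uniform r G) (hGt : hverts G ⊆ Finset.range t)
    (x : ℕ → ℝ) (hx0 : ∀ i, 0 ≤ x i) (hx1 : (∑ i ∈ Finset.range t, x i) = 1)
    (hp : lagrangian r G - η ≤ pPoly r G x) :
    ∃ i ∈ Finset.range t,
      (∀ j ∈ Finset.range t, x j - 2 * (r.factorial : ℝ) * Real.sqrt η ≤ x i) ∧
      (∀ j ∈ Finset.range t,
        lamI r G x j - 2 * (r.factorial : ℝ) * Real.sqrt η ≤ lamI r G x i) := by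
  classical
  set F : ℝ := (r.factorial : ℝ) with hF
  have hF1 : (1:ℝ) ≤ F := by
    have := Nat.factorial_pos r
    rw [hF]
    exact_mod_cast this
  have hF0 : (0:ℝ) < F := by linarith
  have hsq : 0 < Real.sqrt η := Real.sqrt_pos.mpr hη
  have ht0 : t ≠ 0 := by
    rintro rfl
    simp at hx1
  have htne : (Finset.range t).Nonempty := Finset.nonempty_range_iff.mpr ht0
  obtain ⟨i0, hi0mem, hi0max⟩ := Finset.exists_max_image (Finset.range t) x htne
  set s0 : ℝ := Real.sqrt (η / F) with hs0def
  have hs0 : 0 < s0 := Real.sqrt_pos.mpr (by positivity)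
  have hs0sq : s0 ^ 2 = η / F := Real.sq_sqrt (by positivity)
  have hη_eq : η = s0 ^ 2 * F := by rw [hs0sq]; field_simp
  have hs0le : s0 ≤ Real.sqrt η := Real.sqrt_le_sqrt (div_le_self hη.le hF1)
  have hεbig : s0 ≤ 2 * F * Real.sqrt η := by nlinarith
  by_cases hcase : s0 ≤ x i0
  · -- i0 works
    refine ⟨i0, hi0mem, fun j hj => by linarith [hi0max j hj, hsq, hF1, mul_pos (mul_pos (by norm_num : (0:ℝ)<2) hF0) hsq], ?_⟩
    intro j hj
    rcases eq_or_ne j i0 with rfl | hji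
    · nlinarith
    have hij : i0 ≠ j := hji.symm
    set y : ℕ → ℝ := fun u => x u + (if u = i0 then -s0 else 0) + (if u = j then s0 else 0)
      with hy
    have hy0 : ∀ u, 0 ≤ y u := by
      intro u
      simp only [hy]
      split_ifs with h1 h2 h2
      · linarith [hx0 u]
      · subst h1
        linarith
      · linarith [hx0 u, hs0.le]
      · linarith [hx0 u]
    have hy1 : (∑ u ∈ Finset.range t, y u) = 1 := by
      simp only [hy, Finset.sum_add_distrib,
        Finset.sum_ite_eq' (Finset.range t) i0 (fun _ => (-s0 : ℝ)),
        Finset.sum_ite_eq' (Finset.range t) j (fun _ => (s0 : ℝ)),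
        if_pos hi0mem, if_pos hj, hx1]
      ring
    have hlag := aux_le_lagrangian r t hr G hG hGt y hy0 hy1
    have hshift := aux_shift r G x i0 j hij s0
    -- bound the quadratic term
    have hQ : ∑ e ∈ G, (if i0 ∈ e ∧ j ∈ e then ∏ u ∈ (e.erase i0).erase j, x u else 0) ≤ 1 := by
      rw [← Finset.sum_filter]
      have hinj : ∀ e₁ ∈ G.filter (fun e => i0 ∈ e ∧ j ∈ e),
          ∀ e₂ ∈ G.filter (fun e => i0 ∈ e ∧ j ∈ e),
          (e₁.erase i0).erase j = (e₂.erase i0).erase j → e₁ = e₂ := by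
        intro e₁ he₁ e₂ he₂ h
        rw [Finset.mem_filter] at he₁ he₂
        have r1 : ∀ e : Finset ℕ, i0 ∈ e → j ∈ e →
            insert i0 (insert j ((e.erase i0).erase j)) = e := by
          intro e hie hje
          rw [Finset.insert_erase (Finset.mem_erase.mpr ⟨hji, hje⟩), Finset.insert_erase hie]
        rw [← r1 e₁ he₁.2.1 he₁.2.2, ← r1 e₂ he₂.2.1 he₂.2.2, h]
      rw [← Finset.sum_image (f := fun h => ∏ u ∈ h, x u) hinj]
      calc ∑ h ∈ (G.filter (fun e => i0 ∈ e ∧ j ∈ e)).image (fun e => (e.erase i0).erase j),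
            ∏ u ∈ h, x u ≤ (∑ u ∈ Finset.range t, x u) ^ (r - 1 - 1) := by
            apply aux_sum_prod_le x hx0
            · intro g hg
              rw [Finset.mem_image] at hg
              obtain ⟨e, he, rfl⟩ := hg
              rw [Finset.mem_filter] at he
              rw [Finset.card_erase_of_mem (Finset.mem_erase.mpr ⟨hji, he.2.2⟩),
                Finset.card_erase_of_mem he.2.1, hG e he.1]
            · intro g hg
              rw [Finset.mem_image] at hg
              obtain ⟨e, he, rfl⟩ := hg
              rw [Finset.mem_filter] at he
              exact ((Finset.erase_subset _ _).trans (Finset.erase_subset _ _)).trans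
                ((aux_edge_sub G he.1).trans hGt)
        _ = 1 := by rw [hx1, one_pow]
    have hQ2 : F * ∑ e ∈ G, (if i0 ∈ e ∧ j ∈ e then ∏ u ∈ (e.erase i0).erase j, x u else 0)
        ≤ F := by nlinarith
    -- combine
    have hcomb : s0 * (lamI r G x j - lamI r G x i0) ≤ η + s0 ^ 2 * F := by
      have h1 : pPoly r G y ≤ pPoly r G x + η := by linarith
      rw [hshift] at h1
      nlinarith [sq_nonneg s0]
    have hdiv : lamI r G x j - lamI r G x i0 ≤ 2 * s0 * F := by
      nlinarith
    have : 2 * s0 * F ≤ 2 * F * Real.sqrt η := by nlinarith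
    linarith
  · -- all weights are tiny; pick the vertex with max lamI
    push_neg at hcase
    obtain ⟨i1, hi1mem, hi1max⟩ := Finset.exists_max_image (Finset.range t) (lamI r G x) htne
    refine ⟨i1, hi1mem, ?_, fun j hj => by linarith [hi1max j hj]⟩
    intro j hj
    have h1 : x j ≤ x i0 := hi0max j hj
    have h2 : x j < 2 * F * Real.sqrt η := by linarith
    linarith [hx0 i1]
end

section
/- Let G be a graph on [t] and let x = (x_1,…,x_t) be a weight assignment with x_i ≥ 0 and ∑_i x_i = 1, and set β = max_i x_i. Then p_G(x) ≤ β·d(G), where p_G(x) = 2·∑_{{i,j}∈E(G)} x_i x_j. -/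
open Finset
open scoped BigOperators Classical

/-- Minimum weight of a vertex in an edge. -/
noncomputable def minw (x : ℕ → ℝ) (e : Finset ℕ) : ℝ :=
  if h : e.Nonempty then e.inf' h x else 0

lemma edge_subset_hverts {G : HG} {e : Finset ℕ} (he : e ∈ G) : e ⊆ hverts G := by
  intro i hi
  exact Finset.mem_sup.2 ⟨e, he, hi⟩

lemma key_min_sum : ∀ n : ℕ, ∀ G : HG, G.card ≤ n → Uniform 2 G → ∀ D : ℝ, 0 ≤ D →
    (∀ H : HG, H ⊆ G → H.Nonempty → 2 * (H.card : ℝ) ≤ D * ((hverts H).card : ℝ)) →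
    ∀ x : ℕ → ℝ, (∀ i ∈ hverts G, 0 ≤ x i) →
    2 * ∑ e ∈ G, minw x e ≤ D * ∑ i ∈ hverts G, x i := by
  intro n
  induction n with
  | zero =>
    intro G hcard _ D _ _ x _
    have : G = ∅ := Finset.card_eq_zero.1 (Nat.le_zero.1 hcard)
    subst this
    simp [hverts]
  | succ n ih =>
    intro G hcard hU D hD hsub x hx
    rcases G.eq_empty_or_nonempty with rfl | hGne
    · simp [hverts]
    -- hverts G is nonempty
    have hGne' := hGne
    obtain ⟨e₀, he₀⟩ := hGne'
    have he₀ne : e₀.Nonempty := Finset.card_pos.1 (by rw [hU e₀ he₀]; norm_num)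
    have hVne : (hverts G).Nonempty := he₀ne.mono (edge_subset_hverts he₀)
    set θ := (hverts G).inf' hVne x with hθ
    obtain ⟨v, hvmem, hvθ⟩ := Finset.exists_mem_eq_inf' hVne x
    have hθle : ∀ i ∈ hverts G, θ ≤ x i := fun i hi => Finset.inf'_le x hi
    have hθ0 : 0 ≤ θ := by rw [hθ, hvθ]; exact hx v hvmem
    set y : ℕ → ℝ := fun i => x i - θ with hy
    have hy0 : ∀ i ∈ hverts G, 0 ≤ y i := fun i hi => sub_nonneg.2 (hθle i hi)
    -- step1: minw x e = θ + minw y e on edges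
    have step1 : ∀ e ∈ G, minw x e = θ + minw y e := by
      intro e heG
      have hene : e.Nonempty := Finset.card_pos.1 (by rw [hU e heG]; norm_num)
      obtain ⟨a, haE, haInf⟩ := Finset.exists_mem_eq_inf' hene x
      have hyinf : e.inf' hene y = x a - θ := by
        apply le_antisymm
        · exact le_of_le_of_eq (Finset.inf'_le y haE) rfl
        · apply Finset.le_inf'
          intro b hb
          have : e.inf' hene x ≤ x b := Finset.inf'_le x hb
          rw [haInf] at this
          simpa [hy] using sub_le_sub_right this θ
      simp only [minw, dif_pos hene, hyinf, haInf]
      ring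
    -- G' : edges avoiding v
    obtain ⟨ev, hevG, hvev⟩ := Finset.mem_sup.1 hvmem
    set G' : HG := G.filter (fun e => v ∉ e) with hG'
    have hG'sub : G' ⊆ G := Finset.filter_subset _ _
    have hG'card : G'.card ≤ n := by
      have hlt : G'.card < G.card := by
        apply Finset.card_lt_card
        refine ⟨hG'sub, fun h => ?_⟩
        have := h hevG
        rw [hG', Finset.mem_filter] at this
        exact this.2 hvev
      omega
    -- step2: sum of minw y over G equals over G'
    have step2 : ∑ e ∈ G, minw y e = ∑ e ∈ G', minw y e := by
      rw [hG', ← Finset.sum_filter_add_sum_filter_not G (fun e => v ∉ e) (minw y)]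
      have : ∑ e ∈ G.filter (fun e => ¬ v ∉ e), minw y e = 0 := by
        apply Finset.sum_eq_zero
        intro e he
        rw [Finset.mem_filter] at he
        have heG := he.1
        have hvin : v ∈ e := not_not.1 he.2
        have hene : e.Nonempty := Finset.card_pos.1 (by rw [hU e heG]; norm_num)
        have h1 : e.inf' hene y ≤ y v := Finset.inf'_le y hvin
        have h2 : 0 ≤ e.inf' hene y := Finset.le_inf' _ _
          (fun b hb => hy0 b (edge_subset_hverts heG hb))
        have hyv : y v = 0 := by simp [hy, ← hvθ, hθ]
        simp only [minw, dif_pos hene]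
        linarith
      linarith
    -- apply IH to G'
    have hVsub : hverts G' ⊆ hverts G := by
      intro i hi
      obtain ⟨e, he, hie⟩ := Finset.mem_sup.1 hi
      exact Finset.mem_sup.2 ⟨e, hG'sub he, hie⟩
    have ihG' := ih G' hG'card (fun e he => hU e (hG'sub he)) D hD
      (fun H hH => hsub H (hH.trans hG'sub)) y
      (fun i hi => hy0 i (hVsub hi))
    have hsumy : ∑ i ∈ hverts G', y i ≤ ∑ i ∈ hverts G, y i :=
      Finset.sum_le_sum_of_subset_of_nonneg hVsub (fun i hi _ => hy0 i hi)
    have hGself : 2 * (G.card : ℝ) ≤ D * ((hverts G).card : ℝ) :=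
      hsub G (le_refl _) hGne
    have hsumyx : ∑ i ∈ hverts G, y i = (∑ i ∈ hverts G, x i) - ((hverts G).card : ℝ) * θ := by
      simp [hy, Finset.sum_sub_distrib, mul_comm]
    have hsum1 : ∑ e ∈ G, minw x e = (G.card : ℝ) * θ + ∑ e ∈ G, minw y e := by
      rw [Finset.sum_congr rfl step1, Finset.sum_add_distrib]
      simp [mul_comm]
    rw [hsum1, step2]
    have h1 : 2 * ∑ e ∈ G', minw y e ≤ D * ∑ i ∈ hverts G, y i :=
      le_trans ihG' (by nlinarith)
    nlinarith [mul_le_mul_of_nonneg_right hGself hθ0]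

/-- `p_G(x) ≤ β·d(G)` where `β = max_i x_i`. -/
theorem stmt_16 (t : ℕ) (G : HG) (hG : Uniform 2 G) (hGt : ∀ e ∈ G, e ⊆ Finset.range t)
    (x : ℕ → ℝ) (hx0 : ∀ i, 0 ≤ x i) (hx1 : (∑ i ∈ Finset.range t, x i) = 1)
    (β : ℝ) (hβmem : ∃ i ∈ Finset.range t, x i = β)
    (hβub : ∀ i ∈ Finset.range t, x i ≤ β) :
    pPoly 2 G x ≤ β * maxAvgDeg G := by
  obtain ⟨i₀, hi₀, hi₀β⟩ := hβmem
  have hβ0 : 0 ≤ β := hi₀β ▸ hx0 i₀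
  set S : Set ℝ := {v : ℝ | ∃ H : HG, H ⊆ G ∧ H.Nonempty ∧
    v = 2 * (H.card : ℝ) / ((hverts H).card : ℝ)} with hS
  have hmad : maxAvgDeg G = sSup S := rfl
  have hbdd : BddAbove S := by
    refine ⟨2 * (G.card : ℝ), fun v hv => ?_⟩
    obtain ⟨H, hHG, hHne, rfl⟩ := hv
    obtain ⟨e, heH⟩ := hHne
    have hene : e.Nonempty := Finset.card_pos.1 (by rw [hG e (hHG heH)]; norm_num)
    have hV1 : (1 : ℝ) ≤ ((hverts H).card : ℝ) := by
      have : (hverts H).Nonempty := hene.mono (edge_subset_hverts heH)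
      exact_mod_cast Finset.card_pos.2 this
    have hHle : (H.card : ℝ) ≤ (G.card : ℝ) := by
      exact_mod_cast Finset.card_le_card hHG
    have h1 : 2 * (H.card : ℝ) / ((hverts H).card : ℝ) ≤ 2 * (H.card : ℝ) :=
      div_le_self (by positivity) hV1
    linarith
  set D := maxAvgDeg G with hD
  rcases G.eq_empty_or_nonempty with rfl | hGne
  · have hSe : S = ∅ := by
      ext v
      simp only [hS, Set.mem_setOf_eq, Set.mem_empty_iff_false, iff_false]
      rintro ⟨H, hHG, hHne, -⟩
      exact hHne.ne_empty (Finset.subset_empty.1 hHG)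
    have hzero : D = 0 := hmad.trans (by rw [hSe]; exact Real.sSup_empty)
    rw [hzero]
    simp [pPoly]
  have hDmem : 2 * (G.card : ℝ) / ((hverts G).card : ℝ) ∈ S := ⟨G, le_refl _, hGne, rfl⟩
  have hD0 : 0 ≤ D := le_trans (by positivity) (le_csSup hbdd hDmem)
  have hsub : ∀ H : HG, H ⊆ G → H.Nonempty → 2 * (H.card : ℝ) ≤ D * ((hverts H).card : ℝ) := by
    intro H hHG hHne
    have hmem : 2 * (H.card : ℝ) / ((hverts H).card : ℝ) ∈ S := ⟨H, hHG, hHne, rfl⟩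
    have hle : 2 * (H.card : ℝ) / ((hverts H).card : ℝ) ≤ D := le_csSup hbdd hmem
    obtain ⟨e, heH⟩ := hHne
    have hene : e.Nonempty := Finset.card_pos.1 (by rw [hG e (hHG heH)]; norm_num)
    have hVpos : (0 : ℝ) < ((hverts H).card : ℝ) := by
      exact_mod_cast Finset.card_pos.2 (hene.mono (edge_subset_hverts heH))
    rw [div_le_iff₀ hVpos] at hle
    linarith
  have hVrange : hverts G ⊆ Finset.range t := by
    intro i hi
    obtain ⟨e, heG, hie⟩ := Finset.mem_sup.1 hi
    exact hGt e heG hie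
  -- edge products bounded by β * minw
  have hedge : ∀ e ∈ G, ∏ j ∈ e, x j ≤ β * minw x e := by
    intro e heG
    obtain ⟨a, b, hab, rfl⟩ := Finset.card_eq_two.1 (hG e heG)
    have hene : ({a, b} : Finset ℕ).Nonempty := ⟨a, by simp⟩
    have ha : x a ≤ β := hβub a (hGt _ heG (by simp))
    have hb : x b ≤ β := hβub b (hGt _ heG (by simp))
    have hmin : minw x {a, b} = min (x a) (x b) := by
      simp [minw, dif_pos hene, Finset.inf'_insert]
    rw [hmin, Finset.prod_pair hab]
    rcases le_total (x a) (x b) with h | h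
    · rw [min_eq_left h]
      nlinarith [hx0 a, hx0 b]
    · rw [min_eq_right h]
      nlinarith [hx0 a, hx0 b]
  have hkey := key_min_sum G.card G (le_refl _) hG D hD0 hsub x (fun i _ => hx0 i)
  have hsumx : ∑ i ∈ hverts G, x i ≤ 1 := by
    rw [← hx1]
    exact Finset.sum_le_sum_of_subset_of_nonneg hVrange (fun i _ _ => hx0 i)
  have hprodsum : ∑ e ∈ G, ∏ j ∈ e, x j ≤ β * ∑ e ∈ G, minw x e := by
    rw [Finset.mul_sum]
    exact Finset.sum_le_sum hedge
  have : pPoly 2 G x = 2 * ∑ e ∈ G, ∏ j ∈ e, x j := by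
    simp [pPoly, Nat.factorial]
  rw [this]
  nlinarith [mul_le_mul_of_nonneg_left hkey hβ0, mul_le_mul_of_nonneg_left hsumx (mul_nonneg hβ0 hD0)]
end

section
/- Let d be a positive integer and let 0 < ε < 1 be a real. There exists a real δ > 0 such that: if G is a graph on [t] with d(G) ≤ d and x = (x_1,…,x_t) is a weight assignment with x_i ≥ 0, ∑_i x_i = 1, and p_G(x) ≥ d/(d+1) − δ, then there exists I ⊆ [t] with |I| ≤ d+1 such that ∑_{i∈I} x_i ≥ 1 − ε. -/
open Finset
open scoped BigOperators Classical

namespace S17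

open Finset

lemma mem_hverts {G : HG} {i : ℕ} : i ∈ hverts G ↔ ∃ e ∈ G, i ∈ e := by
  simp [hverts, Finset.mem_sup]

lemma edge_subset_hverts {G : HG} {e : Finset ℕ} (he : e ∈ G) : e ⊆ hverts G :=
  fun i hi => mem_hverts.mpr ⟨e, he, hi⟩

lemma pair_of_edge {G : HG} (hu : Uniform 2 G) {e} (he : e ∈ G) :
    ∃ a b, a ≠ b ∧ e = {a, b} :=
  Finset.card_eq_two.mp (hu e he)

lemma eq_pair_of_two_mem {e : Finset ℕ} (h2 : e.card = 2) {v w : ℕ}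
    (hv : v ∈ e) (hw : w ∈ e) (hne : v ≠ w) : e = {v, w} := by
  refine (Finset.eq_of_subset_of_card_le ?_ ?_).symm
  · intro i hi
    rcases Finset.mem_insert.mp hi with rfl | hi
    · exact hv
    · rcases Finset.mem_singleton.mp hi with rfl; exact hw
  · rw [h2, Finset.card_insert_of_notMem (by simp [hne]), Finset.card_singleton]

noncomputable def minw (x : ℕ → ℝ) (e : Finset ℕ) : ℝ :=
  if h : e.Nonempty then e.inf' h x else 0

lemma minw_pair {x : ℕ → ℝ} {a b : ℕ} (hab : a ≠ b) :
    minw x {a, b} = min (x a) (x b) := by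
  rw [minw, dif_pos (Finset.insert_nonempty _ _), Finset.inf'_insert, Finset.inf'_singleton]
  exact Finset.singleton_nonempty _

lemma minw_nonneg {x : ℕ → ℝ} (hx : ∀ i, 0 ≤ x i) (e : Finset ℕ) : 0 ≤ minw x e := by
  rw [minw]
  split
  · exact Finset.le_inf' _ _ fun i _ => hx i
  · exact le_refl _

lemma minw_le {x : ℕ → ℝ} {e : Finset ℕ} {i : ℕ} (hi : i ∈ e) : minw x e ≤ x i := by
  rw [minw, dif_pos ⟨i, hi⟩]
  exact Finset.inf'_le _ hi

lemma T1 (d : ℕ) (G : HG) (hu : Uniform 2 G)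
    (hmad : ∀ H : HG, H ⊆ G → H.Nonempty → 2 * (H.card : ℝ) ≤ (d : ℝ) * ((hverts H).card : ℝ)) :
    ∀ n : ℕ, ∀ x : ℕ → ℝ, (∀ i, 0 ≤ x i) →
      ((hverts G).filter (fun i => 0 < x i)).card = n →
      2 * ∑ e ∈ G, minw x e ≤ (d : ℝ) * ∑ i ∈ hverts G, x i := by
  intro n
  induction n using Nat.strong_induction_on with
  | _ n ih =>
    intro x hx hPn
    by_cases hPe : ((hverts G).filter (fun i => 0 < x i)) = ∅
    · have hz : ∀ i ∈ hverts G, x i = 0 := by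
        intro i hi
        by_contra hne
        have : 0 < x i := lt_of_le_of_ne (hx i) (Ne.symm hne)
        exact Finset.notMem_empty i (hPe ▸ Finset.mem_filter.mpr ⟨hi, this⟩)
      have h1 : ∀ e ∈ G, minw x e = 0 := by
        intro e he
        have hne : e.Nonempty := Finset.card_pos.mp (by rw [hu e he]; norm_num)
        obtain ⟨i, hi⟩ := hne
        have h0 : x i = 0 := hz i (edge_subset_hverts he hi)
        exact le_antisymm (h0 ▸ minw_le hi) (minw_nonneg hx e)
      rw [Finset.sum_congr rfl h1, Finset.sum_congr rfl hz]
      simp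
    · obtain ⟨i₀, hi₀P, hi₀min⟩ :=
        Finset.exists_min_image _ x (Finset.nonempty_of_ne_empty hPe)
      set m := x i₀ with hm
      have hm0 : 0 < m := (Finset.mem_filter.mp hi₀P).2
      set x' : ℕ → ℝ := fun i => x i - min (x i) m with hx'def
      have hx'0 : ∀ i, 0 ≤ x' i := fun i => by
        simp only [hx'def, sub_nonneg]; exact min_le_left _ _
      have hPsub : (hverts G).filter (fun i => 0 < x' i) ⊆
          ((hverts G).filter (fun i => 0 < x i)).erase i₀ := by
        intro i hi
        obtain ⟨hiv, hipos⟩ := Finset.mem_filter.mp hi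
        have hmlt : m < x i := by
          by_contra hle
          push_neg at hle
          have : x' i = 0 := by simp only [hx'def, min_eq_left hle]; ring
          rw [this] at hipos; exact lt_irrefl 0 hipos
        have hiP : i ∈ (hverts G).filter (fun i => 0 < x i) :=
          Finset.mem_filter.mpr ⟨hiv, lt_trans hm0 hmlt⟩
        refine Finset.mem_erase.mpr ⟨?_, hiP⟩
        intro h
        rw [h] at hmlt
        exact lt_irrefl m hmlt
      have hlt : ((hverts G).filter (fun i => 0 < x' i)).card < n := by
        calc ((hverts G).filter (fun i => 0 < x' i)).card
            ≤ (((hverts G).filter (fun i => 0 < x i)).erase i₀).card :=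
              Finset.card_le_card hPsub
          _ < ((hverts G).filter (fun i => 0 < x i)).card :=
              Finset.card_erase_lt_of_mem hi₀P
          _ = n := hPn
      have IH := ih _ hlt x' hx'0 rfl
      set GP := G.filter (fun e => ∀ i ∈ e, 0 < x i) with hGPdef
      have hsplit : ∀ e ∈ GP, minw x e = minw x' e + m := by
        intro e he
        obtain ⟨hGe, hpos⟩ := Finset.mem_filter.mp he
        obtain ⟨a, b, hab, rfl⟩ := pair_of_edge hu hGe
        have ha : m ≤ x a := hi₀min a (Finset.mem_filter.mpr
          ⟨edge_subset_hverts hGe (by simp), hpos a (by simp)⟩)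
        have hb : m ≤ x b := hi₀min b (Finset.mem_filter.mpr
          ⟨edge_subset_hverts hGe (by simp), hpos b (by simp)⟩)
        rw [minw_pair hab, minw_pair hab]
        simp only [hx'def]
        rw [min_eq_right ha, min_eq_right hb]
        rcases le_total (x a) (x b) with h | h
        · rw [min_eq_left h, min_eq_left (by linarith)]; ring
        · rw [min_eq_right h, min_eq_right (by linarith)]; ring
      have hzero : ∑ e ∈ G.filter (fun e => ¬ ∀ i ∈ e, 0 < x i), minw x e = 0 := by
        apply Finset.sum_eq_zero
        intro e he
        obtain ⟨hGe, hbad⟩ := Finset.mem_filter.mp he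
        push_neg at hbad
        obtain ⟨i, hie, hile⟩ := hbad
        have h0 : x i = 0 := le_antisymm hile (hx i)
        exact le_antisymm (h0 ▸ minw_le hie) (minw_nonneg hx e)
      have hsum1 : ∑ e ∈ G, minw x e = ∑ e ∈ GP, minw x e :=
        by rw [← Finset.sum_filter_add_sum_filter_not G (fun e => ∀ i ∈ e, 0 < x i) (minw x),
               hzero, add_zero]
      have hGPsum : ∑ e ∈ GP, minw x e = ∑ e ∈ GP, minw x' e + m * GP.card := by
        rw [Finset.sum_congr rfl hsplit, Finset.sum_add_distrib, Finset.sum_const,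
            nsmul_eq_mul]
        ring
      have hmono : ∑ e ∈ GP, minw x' e ≤ ∑ e ∈ G, minw x' e :=
        Finset.sum_le_sum_of_subset_of_nonneg (Finset.filter_subset _ _)
          (fun e _ _ => minw_nonneg hx'0 e)
      have hGPcard : 2 * (GP.card : ℝ) ≤ (d : ℝ) * (((hverts G).filter (fun i => 0 < x i)).card : ℝ) := by
        rcases Finset.eq_empty_or_nonempty GP with hemp | hne
        · rw [hemp]
          simp only [Finset.card_empty, Nat.cast_zero, mul_zero]
          positivity
        · have h1 := hmad GP (Finset.filter_subset _ _) hne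
          have h2 : hverts GP ⊆ (hverts G).filter (fun i => 0 < x i) := by
            intro i hi
            obtain ⟨e, he, hie⟩ := mem_hverts.mp hi
            obtain ⟨hGe, hpos⟩ := Finset.mem_filter.mp he
            exact Finset.mem_filter.mpr ⟨edge_subset_hverts hGe hie, hpos i hie⟩
          calc 2 * (GP.card : ℝ) ≤ (d : ℝ) * ((hverts GP).card : ℝ) := h1
            _ ≤ _ := by
                apply mul_le_mul_of_nonneg_left _ (Nat.cast_nonneg d)
                exact_mod_cast Nat.cast_le.mpr (Finset.card_le_card h2)
      have hvsum : ∑ i ∈ hverts G, x i = ∑ i ∈ hverts G, x' i + ∑ i ∈ hverts G, min (x i) m := by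
        rw [← Finset.sum_add_distrib]
        apply Finset.sum_congr rfl
        intro i _
        simp only [hx'def]; ring
      have hminP : m * (((hverts G).filter (fun i => 0 < x i)).card : ℝ)
          ≤ ∑ i ∈ hverts G, min (x i) m := by
        calc m * (((hverts G).filter (fun i => 0 < x i)).card : ℝ)
            = ∑ _i ∈ (hverts G).filter (fun i => 0 < x i), m := by
              rw [Finset.sum_const, nsmul_eq_mul]; ring
          _ = ∑ i ∈ (hverts G).filter (fun i => 0 < x i), min (x i) m := by
              apply Finset.sum_congr rfl
              intro i hi
              exact (min_eq_right (hi₀min i hi)).symm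
          _ ≤ ∑ i ∈ hverts G, min (x i) m := by
              apply Finset.sum_le_sum_of_subset_of_nonneg (Finset.filter_subset _ _)
              intro i _ _
              exact le_min (hx i) hm0.le
      have hA : m * (2 * (GP.card : ℝ)) ≤ m * ((d : ℝ) * (((hverts G).filter (fun i => 0 < x i)).card : ℝ)) :=
        mul_le_mul_of_nonneg_left hGPcard hm0.le
      have hB : (d : ℝ) * (m * (((hverts G).filter (fun i => 0 < x i)).card : ℝ))
          ≤ (d : ℝ) * ∑ i ∈ hverts G, min (x i) m :=
        mul_le_mul_of_nonneg_left hminP (Nat.cast_nonneg d)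
      have hBA : m * ((d : ℝ) * (((hverts G).filter (fun i => 0 < x i)).card : ℝ))
          = (d : ℝ) * (m * (((hverts G).filter (fun i => 0 < x i)).card : ℝ)) := by ring
      rw [hsum1, hGPsum, hvsum, mul_add]
      linarith [hA, hB, hBA, IH, hmono]

/-- Neighborhood of `v` in `G`. -/
noncomputable def nbr (G : HG) (v : ℕ) : Finset ℕ :=
  ((G.filter (fun e => v ∈ e)).sup id).erase v

lemma not_mem_nbr (G : HG) (v : ℕ) : v ∉ nbr G v := Finset.notMem_erase _ _

lemma nbr_subset_hverts (G : HG) (v : ℕ) : nbr G v ⊆ hverts G := by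
  intro j hj
  have hj' : j ∈ (G.filter (fun e => v ∈ e)).sup id := Finset.mem_of_mem_erase hj
  obtain ⟨e, he, hje⟩ := Finset.mem_sup.mp hj'
  exact edge_subset_hverts (Finset.mem_filter.mp he).1 hje

lemma mem_nbr_of_edge {G : HG} {v j : ℕ} (hj : j ≠ v) (he : ({v, j} : Finset ℕ) ∈ G) :
    j ∈ nbr G v := by
  refine Finset.mem_erase.mpr ⟨hj, ?_⟩
  apply Finset.mem_sup.mpr
  exact ⟨{v, j}, Finset.mem_filter.mpr ⟨he, by simp⟩, by simp⟩

lemma edge_of_mem_nbr {G : HG} (hu : Uniform 2 G) {v j : ℕ} (hj : j ∈ nbr G v) :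
    j ≠ v ∧ ({v, j} : Finset ℕ) ∈ G := by
  obtain ⟨hjv, hj'⟩ := Finset.mem_erase.mp hj
  obtain ⟨e, he, hje⟩ := Finset.mem_sup.mp hj'
  obtain ⟨hGe, hve⟩ := Finset.mem_filter.mp he
  refine ⟨hjv, ?_⟩
  rwa [← eq_pair_of_two_mem (hu e hGe) hve hje (Ne.symm hjv)]

lemma erase_char {G : HG} (hu : Uniform 2 G) {v : ℕ} {e : Finset ℕ}
    (he : e ∈ G) (hv : v ∈ e) :
    e.erase v = {(e.erase v).sup id} ∧ (e.erase v).sup id ≠ v ∧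
      e = {v, (e.erase v).sup id} := by
  have hc : (e.erase v).card = 1 := by rw [Finset.card_erase_of_mem hv, hu e he]
  obtain ⟨j, hj⟩ := Finset.card_eq_one.mp hc
  have hsup : (e.erase v).sup id = j := by rw [hj, Finset.sup_singleton]; rfl
  have hjv : j ≠ v := by
    have : j ∈ e.erase v := by rw [hj]; exact Finset.mem_singleton_self j
    exact (Finset.mem_erase.mp this).1
  have hje : j ∈ e := by
    have : j ∈ e.erase v := by rw [hj]; exact Finset.mem_singleton_self j
    exact Finset.mem_of_mem_erase this
  refine ⟨by rw [hsup]; exact hj, by rw [hsup]; exact hjv, ?_⟩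
  rw [hsup]
  exact eq_pair_of_two_mem (hu e he) hv hje (Ne.symm hjv)

/-- The sum of `∏_{j ∈ e ∖ v} x j` over edges at `v` equals the weight of the
neighborhood of `v`. -/
lemma sum_prod_erase_eq {G : HG} (hu : Uniform 2 G) (v : ℕ) (x : ℕ → ℝ) :
    ∑ e ∈ G.filter (fun e => v ∈ e), ∏ j ∈ e.erase v, x j = ∑ j ∈ nbr G v, x j := by
  have himg : (G.filter (fun e => v ∈ e)).image (fun e => (e.erase v).sup id) = nbr G v := by
    apply Finset.Subset.antisymm
    · intro j hj
      obtain ⟨e, he, rfl⟩ := Finset.mem_image.mp hj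
      obtain ⟨hGe, hve⟩ := Finset.mem_filter.mp he
      obtain ⟨h1, h2, h3⟩ := erase_char hu hGe hve
      exact mem_nbr_of_edge h2 (h3 ▸ hGe)
    · intro j hj
      obtain ⟨hjv, hedge⟩ := edge_of_mem_nbr hu hj
      refine Finset.mem_image.mpr ⟨{v, j}, Finset.mem_filter.mpr ⟨hedge, by simp⟩, ?_⟩
      rw [Finset.erase_insert (by simp [Ne.symm hjv]), Finset.sup_singleton]
      rfl
  have hinj : ∀ e₁ ∈ G.filter (fun e => v ∈ e), ∀ e₂ ∈ G.filter (fun e => v ∈ e),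
      (fun e => (e.erase v).sup id) e₁ = (fun e => (e.erase v).sup id) e₂ → e₁ = e₂ := by
    intro e₁ h₁ e₂ h₂ heq
    obtain ⟨hG₁, hv₁⟩ := Finset.mem_filter.mp h₁
    obtain ⟨hG₂, hv₂⟩ := Finset.mem_filter.mp h₂
    obtain ⟨_, _, h₁3⟩ := erase_char hu hG₁ hv₁
    obtain ⟨_, _, h₂3⟩ := erase_char hu hG₂ hv₂
    rw [h₁3, h₂3]
    simp only at heq
    rw [heq]
  rw [← himg, Finset.sum_image hinj]
  apply Finset.sum_congr rfl
  intro e he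
  obtain ⟨hGe, hve⟩ := Finset.mem_filter.mp he
  obtain ⟨h1, _, _⟩ := erase_char hu hGe hve
  rw [h1, Finset.prod_singleton, Finset.sup_singleton]
  rfl

/-- Sum of edge weights over edges at `v` equals `x v` times neighborhood weight. -/
lemma sum_edges_at_eq {G : HG} (hu : Uniform 2 G) (v : ℕ) (x : ℕ → ℝ) :
    ∑ e ∈ G.filter (fun e => v ∈ e), ∏ i ∈ e, x i = x v * ∑ j ∈ nbr G v, x j := by
  rw [← sum_prod_erase_eq hu v x, Finset.mul_sum]
  apply Finset.sum_congr rfl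
  intro e he
  obtain ⟨_, hve⟩ := Finset.mem_filter.mp he
  rw [Finset.mul_prod_erase e x hve]

/-- Generic bound on sums of edge weights over edges at `w` with other
endpoints inside `T`. -/
lemma inner_bound {G : HG} (hu : Uniform 2 G) {S : HG} (hS : S ⊆ G) (w : ℕ)
    {T : Finset ℕ} (hT : ∀ e ∈ S, w ∈ e → ∀ j ∈ e.erase w, j ∈ T)
    {x : ℕ → ℝ} (hx : ∀ i, 0 ≤ x i) :
    ∑ e ∈ S.filter (fun e => w ∈ e), ∏ i ∈ e, x i ≤ x w * ∑ j ∈ T, x j := by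
  have h1 : ∑ e ∈ S.filter (fun e => w ∈ e), ∏ i ∈ e, x i
      = x w * ∑ e ∈ S.filter (fun e => w ∈ e), ∏ j ∈ e.erase w, x j := by
    rw [Finset.mul_sum]
    apply Finset.sum_congr rfl
    intro e he
    obtain ⟨_, hwe⟩ := Finset.mem_filter.mp he
    rw [Finset.mul_prod_erase e x hwe]
  rw [h1]
  apply mul_le_mul_of_nonneg_left _ (hx w)
  -- sum over edges of the other endpoint's weight is at most the weight of T
  have himg2 : ∀ e ∈ S.filter (fun e => w ∈ e), ∏ j ∈ e.erase w, x j
      = x ((e.erase w).sup id) := by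
    intro e he
    obtain ⟨hSe, hwe⟩ := Finset.mem_filter.mp he
    obtain ⟨h1', _, _⟩ := erase_char hu (hS hSe) hwe
    rw [h1', Finset.prod_singleton, Finset.sup_singleton]
    rfl
  rw [Finset.sum_congr rfl himg2]
  have hinj : ∀ e₁ ∈ S.filter (fun e => w ∈ e), ∀ e₂ ∈ S.filter (fun e => w ∈ e),
      (fun e => (e.erase w).sup id) e₁ = (fun e => (e.erase w).sup id) e₂ → e₁ = e₂ := by
    intro e₁ h₁ e₂ h₂ heq
    obtain ⟨hG₁, hv₁⟩ := Finset.mem_filter.mp h₁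
    obtain ⟨hG₂, hv₂⟩ := Finset.mem_filter.mp h₂
    obtain ⟨_, _, h₁3⟩ := erase_char hu (hS hG₁) hv₁
    obtain ⟨_, _, h₂3⟩ := erase_char hu (hS hG₂) hv₂
    rw [h₁3, h₂3]
    simp only at heq
    rw [heq]
  rw [← Finset.sum_image hinj]
  apply Finset.sum_le_sum_of_subset_of_nonneg _ (fun i _ _ => hx i)
  intro j hj
  obtain ⟨e, he, rfl⟩ := Finset.mem_image.mp hj
  obtain ⟨hSe, hwe⟩ := Finset.mem_filter.mp he
  obtain ⟨h1', _, _⟩ := erase_char hu (hS hSe) hwe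
  apply hT e hSe hwe
  rw [h1', Finset.sup_singleton]
  simp

/-- Sum over a subset of a biUnion is at most the double sum. -/
lemma sum_le_biUnion {A : Finset ℕ} {g : ℕ → HG} {S : HG} {f : Finset ℕ → ℝ}
    (hf : ∀ e, 0 ≤ f e) (hS : S ⊆ A.biUnion g) :
    ∑ e ∈ S, f e ≤ ∑ a ∈ A, ∑ e ∈ g a, f e := by
  have hmain : ∀ (A' : Finset ℕ), ∑ e ∈ A'.biUnion g, f e ≤ ∑ a ∈ A', ∑ e ∈ g a, f e := by
    intro A'
    induction A' using Finset.induction_on with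
    | empty => simp
    | insert _ _ hnotmem ih =>
      rename_i a A''
      rw [Finset.biUnion_insert, Finset.sum_insert hnotmem]
      have hui := Finset.sum_union_inter (s₁ := g a) (s₂ := A''.biUnion g) (f := f)
      have hnn : 0 ≤ ∑ e ∈ g a ∩ A''.biUnion g, f e :=
        Finset.sum_nonneg (fun e _ => hf e)
      linarith
  calc ∑ e ∈ S, f e ≤ ∑ e ∈ A.biUnion g, f e :=
        Finset.sum_le_sum_of_subset_of_nonneg hS (fun e _ _ => hf e)
    _ ≤ ∑ a ∈ A, ∑ e ∈ g a, f e := hmain A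

/-- Counting swap: double sums over incidences. -/
lemma sum_filter_swap (A : Finset ℕ) (S : HG) (f : Finset ℕ → ℝ) :
    ∑ w ∈ A, ∑ e ∈ S.filter (fun e => w ∈ e), f e
      = ∑ e ∈ S, ((A.filter (fun w => w ∈ e)).card : ℝ) * f e := by
  simp_rw [Finset.sum_filter]
  rw [Finset.sum_comm]
  apply Finset.sum_congr rfl
  intro e _
  rw [Finset.sum_ite, Finset.sum_const, Finset.sum_const_zero, add_zero, nsmul_eq_mul]

/-- Maximum average degree decreases inside a neighborhood. -/
lemma mad_nbr {G : HG} (hu : Uniform 2 G) {c : ℝ}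
    (hmad : ∀ H : HG, H ⊆ G → H.Nonempty → 2 * (H.card : ℝ) ≤ c * ((hverts H).card : ℝ))
    (v : ℕ) :
    ∀ H : HG, H ⊆ G → (∀ e ∈ H, e ⊆ nbr G v) → H.Nonempty →
      2 * (H.card : ℝ) ≤ (c - 1) * ((hverts H).card : ℝ) := by
  intro H hHG hHnbr hHne
  set W := hverts H with hW
  have hWnbr : W ⊆ nbr G v := by
    intro i hi
    obtain ⟨e, he, hie⟩ := mem_hverts.mp hi
    exact hHnbr e he hie
  have hWne : W.Nonempty := by
    obtain ⟨e, he⟩ := hHne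
    have : e.Nonempty := Finset.card_pos.mp (by rw [hu e (hHG he)]; norm_num)
    obtain ⟨i, hi⟩ := this
    exact ⟨i, edge_subset_hverts he hi⟩
  have hvW : v ∉ W := fun h => not_mem_nbr G v (hWnbr h)
  set H' := H ∪ W.image (fun w => ({v, w} : Finset ℕ)) with hH'
  have himgsub : W.image (fun w => ({v, w} : Finset ℕ)) ⊆ G := by
    intro e he
    obtain ⟨w, hw, rfl⟩ := Finset.mem_image.mp he
    exact (edge_of_mem_nbr hu (hWnbr hw)).2
  have hdisj : Disjoint H (W.image (fun w => ({v, w} : Finset ℕ))) := by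
    rw [Finset.disjoint_left]
    intro e heH heI
    obtain ⟨w, hw, rfl⟩ := Finset.mem_image.mp heI
    have : v ∈ nbr G v := hHnbr _ heH (by simp)
    exact not_mem_nbr G v this
  have hinj : ∀ w₁ ∈ W, ∀ w₂ ∈ W, ({v, w₁} : Finset ℕ) = {v, w₂} → w₁ = w₂ := by
    intro w₁ h₁ w₂ h₂ heq
    have hne₁ : w₁ ≠ v := fun h => hvW (h ▸ h₁)
    have : w₁ ∈ ({v, w₂} : Finset ℕ) := heq ▸ (by simp : w₁ ∈ ({v, w₁} : Finset ℕ))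
    rcases Finset.mem_insert.mp this with h | h
    · exact absurd h hne₁
    · exact Finset.mem_singleton.mp h
  have hcard : (H'.card : ℝ) = H.card + W.card := by
    rw [hH', Finset.card_union_of_disjoint hdisj, Finset.card_image_of_injOn hinj]
    push_cast; ring
  have hverts' : hverts H' = insert v W := by
    rw [hH']
    show (H ∪ W.image (fun w => ({v, w} : Finset ℕ))).sup id = insert v W
    rw [Finset.sup_union, Finset.sup_image]
    have h2 : W.sup ((id : Finset ℕ → Finset ℕ) ∘ (fun w => ({v, w} : Finset ℕ)))
        = insert v W := by
      apply Finset.Subset.antisymm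
      · intro i hi
        obtain ⟨w, hw, hiw⟩ := Finset.mem_sup.mp hi
        simp only [Function.comp, id] at hiw
        rcases Finset.mem_insert.mp hiw with rfl | h
        · exact Finset.mem_insert_self _ _
        · exact Finset.mem_insert_of_mem (Finset.mem_singleton.mp h ▸ hw)
      · intro i hi
        rcases Finset.mem_insert.mp hi with rfl | h
        · obtain ⟨w, hw⟩ := hWne
          exact Finset.mem_sup.mpr ⟨w, hw, by simp [Function.comp]⟩
        · exact Finset.mem_sup.mpr ⟨i, h, by simp [Function.comp]⟩
    rw [h2]
    have h3 : H.sup id = W := rfl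
    rw [h3, sup_eq_right]
    exact Finset.subset_insert v W
  have hvcard : ((hverts H').card : ℝ) = (W.card : ℝ) + 1 := by
    rw [hverts', Finset.card_insert_of_notMem hvW]; push_cast; ring
  have hH'G : H' ⊆ G := Finset.union_subset hHG himgsub
  have hH'ne : H'.Nonempty := hHne.mono Finset.subset_union_left
  have hmain := hmad H' hH'G hH'ne
  rw [hcard, hvcard] at hmain
  have hW1 : 1 ≤ W.card := Finset.card_pos.mpr hWne
  have hchoose : 2 * (H.card : ℝ) ≤ (W.card : ℝ) * ((W.card : ℝ) - 1) := by
    have hsub : H ⊆ W.powersetCard 2 := by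
      intro e he
      exact Finset.mem_powersetCard.mpr ⟨edge_subset_hverts he, hu e (hHG he)⟩
    have h1 : H.card ≤ (W.card).choose 2 := by
      calc H.card ≤ (W.powersetCard 2).card := Finset.card_le_card hsub
        _ = (W.card).choose 2 := Finset.card_powersetCard 2 W
    have h2 : 2 * ((W.card).choose 2) = W.card * (W.card - 1) := by
      rw [Nat.choose_two_right]
      apply Nat.mul_div_cancel'
      rcases Nat.even_or_odd W.card with he | ho
      · exact Dvd.dvd.mul_right he.two_dvd _
      · apply Dvd.dvd.mul_left
        rcases ho with ⟨k, hk⟩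
        exact ⟨k, by omega⟩
    have h3 : 2 * H.card ≤ W.card * (W.card - 1) := by omega
    have h4 := (Nat.cast_le (α := ℝ)).mpr h3
    push_cast [Nat.cast_sub hW1] at h4
    convert h4 using 2 <;> push_cast <;> ring
  have hWcast : (1 : ℝ) ≤ (W.card : ℝ) := by exact_mod_cast hW1
  have hgoal : 2 * (H.card : ℝ) ≤ (c - 1) * (W.card : ℝ) := by
    rcases le_or_gt c ((W.card : ℝ)) with hcase | hcase
    · nlinarith
    · nlinarith
  exact hgoal

/-- Motzkin–Straus bound for graphs of bounded maximum average degree. -/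
lemma MS : ∀ (m : ℕ) (G : HG), Uniform 2 G →
    (∀ H : HG, H ⊆ G → H.Nonempty → 2 * (H.card : ℝ) ≤ (m : ℝ) * ((hverts H).card : ℝ)) →
    ∀ x : ℕ → ℝ, (∀ i, 0 ≤ x i) →
      2 * ∑ e ∈ G, ∏ i ∈ e, x i
        ≤ (1 - 1/((m : ℝ)+1)) * (∑ i ∈ hverts G, x i)^2 := by
  intro m
  induction m with
  | zero =>
    intro G hu hmad x hx
    have hempty : G = ∅ := by
      by_contra h
      obtain ⟨e, he⟩ := Finset.nonempty_of_ne_empty h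
      have h2 := hmad {e} (Finset.singleton_subset_iff.mpr he)
        ⟨e, Finset.mem_singleton_self e⟩
      simp only [Finset.card_singleton, Nat.cast_one, Nat.cast_zero, zero_mul,
        mul_one] at h2
      norm_num at h2
    subst hempty
    simp
  | succ m ih =>
    intro G hu hmad x hx
    have hcast : ((m+1 : ℕ) : ℝ) + 1 = (m : ℝ) + 2 := by push_cast; ring
    rw [hcast]
    rcases Finset.eq_empty_or_nonempty G with rfl | hGne
    · simp only [Finset.sum_empty, mul_zero]
      have h1 : (0:ℝ) ≤ 1 - 1/((m:ℝ)+2) := by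
        rw [sub_nonneg, div_le_one (by positivity)]
        have := Nat.cast_nonneg (α := ℝ) m
        linarith
      positivity
    · have hVne : (hverts G).Nonempty := by
        obtain ⟨e, he⟩ := hGne
        have hene : e.Nonempty := Finset.card_pos.mp (by rw [hu e he]; norm_num)
        obtain ⟨i, hi⟩ := hene
        exact ⟨i, edge_subset_hverts he hi⟩
      obtain ⟨v, hvV, hvmax⟩ :=
        Finset.exists_max_image (hverts G) (fun i => ∑ j ∈ nbr G i, x j) hVne
      set u := ∑ j ∈ nbr G v, x j with hudef
      set S := ∑ i ∈ hverts G, x i with hSdef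
      have hu0 : 0 ≤ u := Finset.sum_nonneg fun j _ => hx j
      have hSu : u ≤ S := by
        apply Finset.sum_le_sum_of_subset_of_nonneg (nbr_subset_hverts G v)
          (fun i _ _ => hx i)
      set GN := G.filter (fun e => e ⊆ nbr G v) with hGNdef
      have hGNuniform : Uniform 2 GN := fun e he => hu e (Finset.mem_filter.mp he).1
      have hmadGN : ∀ H : HG, H ⊆ GN → H.Nonempty →
          2 * (H.card : ℝ) ≤ (m : ℝ) * ((hverts H).card : ℝ) := by
        intro H hH hne
        have hmm := mad_nbr hu hmad v H (hH.trans (Finset.filter_subset _ _))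
          (fun e he => (Finset.mem_filter.mp (hH he)).2) hne
        have heq : ((m+1 : ℕ) : ℝ) - 1 = (m : ℝ) := by push_cast; ring
        rw [heq] at hmm
        exact hmm
      have hGNbound := ih GN hGNuniform hmadGN x hx
      have hnn1 : (0:ℝ) ≤ 1 - 1/((m:ℝ)+1) := by
        rw [sub_nonneg, div_le_one (by positivity)]
        have := Nat.cast_nonneg (α := ℝ) m
        linarith
      have h1 : ∑ i ∈ hverts GN, x i ≤ u := by
        apply Finset.sum_le_sum_of_subset_of_nonneg _ (fun i _ _ => hx i)
        intro i hi
        obtain ⟨e, he, hie⟩ := mem_hverts.mp hi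
        exact (Finset.mem_filter.mp he).2 hie
      have h2 : 2 * ∑ e ∈ GN, ∏ i ∈ e, x i ≤ (1 - 1/((m:ℝ)+1)) * u^2 := by
        refine le_trans hGNbound (mul_le_mul_of_nonneg_left ?_ hnn1)
        exact pow_le_pow_left₀ (Finset.sum_nonneg fun i _ => hx i) h1 2
      set Grest := G.filter (fun e => ¬ e ⊆ nbr G v) with hGrestdef
      have hrest : ∑ e ∈ Grest, ∏ i ∈ e, x i ≤ (S - u) * u := by
        have hcover : Grest ⊆ ((hverts G) \ (nbr G v)).biUnion
            (fun w => G.filter (fun e => w ∈ e)) := by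
          intro e he
          obtain ⟨hGe, hnsub⟩ := Finset.mem_filter.mp he
          obtain ⟨w, hwe, hwn⟩ := Finset.not_subset.mp hnsub
          exact Finset.mem_biUnion.mpr ⟨w,
            Finset.mem_sdiff.mpr ⟨edge_subset_hverts hGe hwe, hwn⟩,
            Finset.mem_filter.mpr ⟨hGe, hwe⟩⟩
        calc ∑ e ∈ Grest, ∏ i ∈ e, x i
            ≤ ∑ w ∈ (hverts G) \ (nbr G v), ∑ e ∈ G.filter (fun e => w ∈ e), ∏ i ∈ e, x i :=
              sum_le_biUnion (fun e => Finset.prod_nonneg fun i _ => hx i) hcover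
          _ = ∑ w ∈ (hverts G) \ (nbr G v), x w * ∑ j ∈ nbr G w, x j := by
              apply Finset.sum_congr rfl
              intro w _
              exact sum_edges_at_eq hu w x
          _ ≤ ∑ w ∈ (hverts G) \ (nbr G v), x w * u := by
              apply Finset.sum_le_sum
              intro w hw
              exact mul_le_mul_of_nonneg_left
                (hvmax w (Finset.mem_sdiff.mp hw).1) (hx w)
          _ = (S - u) * u := by
              rw [← Finset.sum_mul, Finset.sum_sdiff_eq_sub (nbr_subset_hverts G v)]
      have hsplitsum : ∑ e ∈ G, ∏ i ∈ e, x i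
          = ∑ e ∈ GN, ∏ i ∈ e, x i + ∑ e ∈ Grest, ∏ i ∈ e, x i :=
        (Finset.sum_filter_add_sum_filter_not G (fun e => e ⊆ nbr G v) _).symm
      have hfin : (1 - 1/((m:ℝ)+1))*u^2 + 2*((S-u)*u) ≤ (1 - 1/((m:ℝ)+2))*S^2 := by
        rw [← sub_nonneg]
        have expand : (1 - 1/((m:ℝ)+2))*S^2 - ((1 - 1/((m:ℝ)+1))*u^2 + 2*((S-u)*u))
            = (((m:ℝ)+1)*S - ((m:ℝ)+2)*u)^2 / (((m:ℝ)+1)*((m:ℝ)+2)) := by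
          field_simp
          ring
        rw [expand]
        positivity
      rw [hsplitsum]
      linarith

set_option maxHeartbeats 1000000 in
lemma arith_main {K δ δ' ε a u r p PN : ℝ}
    (hK : 2 ≤ K) (hδ0 : 0 < δ) (hδ'0 : 0 < δ')
    (hδ1 : δ ≤ δ'/(36*K)) (hδ2 : δ ≤ ε^2/(48*K)) (hδ3 : δ ≤ 1/(324*K))
    (hε0 : 0 < ε) (hε1 : ε < 1)
    (ha0 : 0 ≤ a) (hu0 : 0 ≤ u) (hr0 : 0 ≤ r) (haur : a + u + r = 1)
    (hp : K/(K+1) - δ ≤ p) (hpa : p ≤ K*a)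
    (hβ : p ≤ 2*(a*u) + (1 - 1/K)*u^2 + 2*(r*u) + r^2)
    (hζ : p - 2*(a*u) - 2*(r*u) - r^2 ≤ PN) :
    r ≤ ε/2 ∧ 1/2 ≤ u ∧ (1 - 1/K) - δ' ≤ PN/u^2 := by
  have hK0 : (0:ℝ) < K := by linarith
  have hK1 : (0:ℝ) < K+1 := by linarith
  have hδle1 : δ ≤ 1 := by
    have h36 : (0:ℝ) < 324*K := by linarith
    have h325 := hδ3
    rw [le_div_iff₀ h36] at h325
    nlinarith [h325, hδ0.le, hK]
  have h_a : 1/(K+1) - δ ≤ a := by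
    have hKa : K/(K+1) - δ ≤ K*a := le_trans hp hpa
    have key : K*(a - (1/(K+1) - δ)) = K*a - K/(K+1) + K*δ := by
      field_simp
      ring
    have h2 : 0 ≤ K*(a - (1/(K+1) - δ)) := by
      rw [key]
      nlinarith [mul_nonneg (by linarith : (0:ℝ) ≤ K - 1) hδ0.le, hKa]
    have h3 := (mul_nonneg_iff_of_pos_left hK0).mp h2
    linarith
  have har : a + r = 1 - u := by linarith
  have hid : 2*(a*u) + 2*(r*u) = 2*(u*(1-u)) := by
    have : a = 1 - u - r := by linarith
    rw [this]; ring
  have hident : 2*(u*(1-u)) + (1 - 1/K)*u^2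
      = K/(K+1) - ((K+1)/K)*(K/(K+1) - u)^2 := by
    field_simp
    ring
  have hg : ((K+1)/K)*(K/(K+1) - u)^2 ≤ δ + r^2 := by
    have h1 : K/(K+1) - δ ≤ 2*(u*(1-u)) + (1 - 1/K)*u^2 + r^2 := by
      rw [← hid]; linarith
    rw [hident] at h1
    linarith
  have hr1 : r ≤ 1 := by linarith
  have hKdivge : (1:ℝ) ≤ (K+1)/K := by
    rw [le_div_iff₀ hK0]; linarith
  have hsqrt_nn : 0 ≤ Real.sqrt (3*K*δ) := Real.sqrt_nonneg _
  have hsq : Real.sqrt (3*K*δ)^2 = 3*K*δ := Real.sq_sqrt (by positivity)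
  have hr_main : r ≤ δ + Real.sqrt (3*K*δ) := by
    rcases le_or_gt r δ with h | h
    · linarith
    · have hgpos : r - δ ≤ K/(K+1) - u := by
        have hueq : u = 1 - a - r := by linarith
        have : K/(K+1) - u = a + r - 1/(K+1) := by
          rw [hueq]
          field_simp
          ring
        linarith
      have h4 : ((K+1)/K)*(r-δ)^2 ≤ δ + r^2 := by
        have hsqle : (r-δ)^2 ≤ (K/(K+1) - u)^2 :=
          pow_le_pow_left₀ (by linarith) hgpos 2
        have hcoef : (0:ℝ) ≤ (K+1)/K := by positivity
        calc ((K+1)/K)*(r-δ)^2 ≤ ((K+1)/K)*(K/(K+1) - u)^2 :=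
              mul_le_mul_of_nonneg_left hsqle hcoef
          _ ≤ δ + r^2 := hg
      have h5 : (r-δ)^2 ≤ 3*K*δ := by
        have hexp : ((K+1)/K)*(r-δ)^2 = (r-δ)^2 + (r-δ)^2/K := by
          field_simp
        rw [hexp] at h4
        have h6 : (r-δ)^2/K ≤ 3*δ := by nlinarith [hr1, hδ0.le, hδle1, sq_nonneg (r-δ)]
        rw [div_le_iff₀ hK0] at h6
        nlinarith
      have := (Real.le_sqrt (by linarith) (by positivity)).mpr h5
      linarith
  have hsqrtb : Real.sqrt (3*K*δ) ≤ ε/4 := by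
    have h6 : 3*K*δ ≤ (ε/4)^2 := by
      have h7 : 3*K*(ε^2/(48*K)) = (ε/4)^2 := by
        field_simp; ring
      have h7b := mul_le_mul_of_nonneg_left hδ2 (by positivity : (0:ℝ) ≤ 3*K)
      linarith
    calc Real.sqrt (3*K*δ) ≤ Real.sqrt ((ε/4)^2) := Real.sqrt_le_sqrt h6
      _ = ε/4 := Real.sqrt_sq (by positivity)
  have hδε : δ ≤ ε/4 := by
    have h48 : (0:ℝ) < 48*K := by linarith
    have h8 := hδ2
    rw [le_div_iff₀ h48] at h8
    nlinarith [h8, mul_nonneg hε0.le (by linarith : (0:ℝ) ≤ 1 - ε), hδ0.le, hK]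
  have hrε : r ≤ ε/2 := by linarith
  have hr2 : r^2 ≤ 8*K*δ := by
    have h9 : r^2 ≤ (δ + Real.sqrt (3*K*δ))^2 := pow_le_pow_left₀ hr0 hr_main 2
    nlinarith [h9, hsq, sq_nonneg (δ - Real.sqrt (3*K*δ)), hδle1, hδ0.le, hK]
  have hKδ36 : 9*K*δ ≤ 1/36 := by
    have h36 : (0:ℝ) < 324*K := by linarith
    have h10 := hδ3
    rw [le_div_iff₀ h36] at h10
    linarith
  have hu2 : 1/2 ≤ u := by
    have hδK : δ ≤ K*δ := le_mul_of_one_le_left hδ0.le (by linarith)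
    have h11 : (K/(K+1) - u)^2 ≤ δ + r^2 := by
      have := le_mul_of_one_le_left (sq_nonneg (K/(K+1) - u)) hKdivge
      linarith [hg]
    have h12 : (K/(K+1) - u)^2 ≤ 1/36 := by linarith [hr2, hKδ36, hδK]
    have h13 : K/(K+1) - u ≤ 1/6 := by nlinarith [h12]
    have h14 : (2:ℝ)/3 ≤ K/(K+1) := by
      rw [div_le_div_iff₀ (by norm_num) hK1]; linarith
    linarith
  have hPN : (1 - 1/K)*u^2 - 9*K*δ ≤ PN := by
    have h15 : K/(K+1) - δ - 2*(u*(1-u)) - r^2 ≤ PN := by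
      rw [← hid]; linarith
    have h16 : K/(K+1) - 2*(u*(1-u)) = (1 - 1/K)*u^2 + ((K+1)/K)*(K/(K+1) - u)^2 := by
      linarith [hident]
    have hy2 : (0:ℝ) ≤ ((K+1)/K)*(K/(K+1) - u)^2 := by positivity
    have hδK : δ ≤ K*δ := le_mul_of_one_le_left hδ0.le (by linarith)
    linarith [hr2]
  have hu2pos : (0:ℝ) < u^2 := by positivity
  have hδ'rel : 36*K*δ ≤ δ' := by
    have h36 : (0:ℝ) < 36*K := by linarith
    have h17 := hδ1
    rw [le_div_iff₀ h36] at h17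
    linarith
  refine ⟨hrε, hu2, ?_⟩
  rw [le_div_iff₀ hu2pos]
  have hexp2 : ((1 - 1/K) - δ')*u^2 = (1-1/K)*u^2 - δ'*u^2 := by ring
  have hu14 : 1/4 ≤ u^2 := by
    nlinarith [mul_nonneg (by linarith : (0:ℝ) ≤ u - 1/2) (by linarith : (0:ℝ) ≤ u + 1/2)]
  have hfin : δ'*(1/4) ≤ δ'*u^2 := mul_le_mul_of_nonneg_left hu14 hδ'0.le
  linarith [hPN, hδ'rel, hfin, hexp2]

-- Base case `d = 1`: `G` is a matching.
set_option maxHeartbeats 1000000 in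
lemma stabBase (ε : ℝ) (hε0 : 0 < ε) (hε1 : ε < 1)
    (t : ℕ) (G : HG) (huni : Uniform 2 G) (hsub : ∀ e ∈ G, e ⊆ Finset.range t)
    (hmad : ∀ H : HG, H ⊆ G → H.Nonempty →
      2 * (H.card : ℝ) ≤ ((1:ℕ) : ℝ) * ((hverts H).card : ℝ))
    (x : ℕ → ℝ) (hx : ∀ i, 0 ≤ x i) (hxsum : (∑ i ∈ Finset.range t, x i) = 1)
    (hp : ((1:ℕ) : ℝ) / (((1:ℕ) : ℝ) + 1) - ε/2 ≤ pPoly 2 G x) :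
    ∃ I : Finset ℕ, I ⊆ Finset.range t ∧ I.card ≤ 1 + 1 ∧ 1 - ε ≤ ∑ i ∈ I, x i := by
  have hpp : pPoly 2 G x = 2 * ∑ e ∈ G, ∏ i ∈ e, x i := by
    unfold pPoly; norm_num [Nat.factorial]
  rw [hpp] at hp
  norm_num at hp
  -- hp : 1/2 - ε/2 ≤ 2 * ∑ ...
  have hGne : G.Nonempty := by
    rcases Finset.eq_empty_or_nonempty G with rfl | h
    · simp only [Finset.sum_empty, mul_zero] at hp
      linarith
    · exact h
  have hdisj : ∀ e ∈ G, ∀ f ∈ G, e ≠ f → Disjoint e f := by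
    intro e he f hf hef
    rw [Finset.disjoint_left]
    intro w hwe
    intro hwf
    have hpairH : ({e, f} : HG) ⊆ G := by
      intro g hg
      rcases Finset.mem_insert.mp hg with rfl | hg
      · exact he
      · exact (Finset.mem_singleton.mp hg) ▸ hf
    have hcardH : ({e, f} : HG).card = 2 := by
      rw [Finset.card_insert_of_notMem (by simp [hef]), Finset.card_singleton]
    have hV : hverts ({e, f} : HG) = e ∪ f := by
      show ({e, f} : HG).sup id = e ∪ f
      rw [Finset.sup_insert, Finset.sup_singleton]
      rfl
    have hcardUV : (e ∪ f).card ≤ 3 := by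
      have h1 := Finset.card_union_add_card_inter e f
      have h2 : 1 ≤ (e ∩ f).card :=
        Finset.card_pos.mpr ⟨w, Finset.mem_inter.mpr ⟨hwe, hwf⟩⟩
      have he2 := huni e he
      have hf2 := huni f hf
      omega
    have hq := hmad {e, f} hpairH ⟨e, Finset.mem_insert_self e {f}⟩
    rw [hcardH, hV] at hq
    have hc3 : ((e ∪ f).card : ℝ) ≤ 3 := by exact_mod_cast hcardUV
    push_cast at hq
    linarith
  have hsum_edges : ∑ e ∈ G, ∑ i ∈ e, x i ≤ 1 := by
    have hpd : (↑G : Set (Finset ℕ)).PairwiseDisjoint (id : Finset ℕ → Finset ℕ) := by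
      intro e he f hf hef
      exact hdisj e he f hf hef
    have hbiu : ∑ i ∈ G.biUnion id, x i = ∑ e ∈ G, ∑ i ∈ e, x i := by
      rw [Finset.sum_biUnion hpd]
      rfl
    rw [← hbiu, ← hxsum]
    apply Finset.sum_le_sum_of_subset_of_nonneg _ (fun i _ _ => hx i)
    intro i hi
    obtain ⟨e, he, hie⟩ := Finset.mem_biUnion.mp hi
    exact hsub e he hie
  obtain ⟨e₀, he₀, hmax⟩ := Finset.exists_max_image G (fun e => ∑ i ∈ e, x i) hGne
  have hs0 : 0 ≤ ∑ i ∈ e₀, x i := Finset.sum_nonneg fun i _ => hx i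
  have hkey : ∀ e ∈ G, 4 * ∏ i ∈ e, x i ≤ (∑ i ∈ e, x i) * (∑ i ∈ e₀, x i) := by
    intro e he
    have hmaxe := hmax e he
    obtain ⟨i, j, hij, rfl⟩ := pair_of_edge huni he
    rw [Finset.prod_pair hij, Finset.sum_pair hij]
    rw [Finset.sum_pair hij] at hmaxe
    nlinarith [sq_nonneg (x i - x j), hx i, hx j, hs0]
  have hchain : 4 * ∑ e ∈ G, ∏ i ∈ e, x i ≤ ∑ i ∈ e₀, x i := by
    calc 4 * ∑ e ∈ G, ∏ i ∈ e, x i = ∑ e ∈ G, 4 * ∏ i ∈ e, x i := by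
          rw [Finset.mul_sum]
      _ ≤ ∑ e ∈ G, (∑ i ∈ e, x i) * (∑ i ∈ e₀, x i) := Finset.sum_le_sum hkey
      _ = (∑ e ∈ G, ∑ i ∈ e, x i) * (∑ i ∈ e₀, x i) := by rw [Finset.sum_mul]
      _ ≤ 1 * (∑ i ∈ e₀, x i) := mul_le_mul_of_nonneg_right hsum_edges hs0
      _ = ∑ i ∈ e₀, x i := one_mul _
  refine ⟨e₀, hsub e₀ he₀, by rw [huni e₀ he₀], by linarith⟩

set_option maxHeartbeats 2000000 in
lemma stabAux : ∀ d : ℕ, 0 < d → ∀ ε : ℝ, 0 < ε → ε < 1 →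
    ∃ δ : ℝ, 0 < δ ∧
      ∀ t : ℕ, ∀ G : HG, Uniform 2 G → (∀ e ∈ G, e ⊆ Finset.range t) →
        (∀ H : HG, H ⊆ G → H.Nonempty →
          2 * (H.card : ℝ) ≤ (d : ℝ) * ((hverts H).card : ℝ)) →
        ∀ x : ℕ → ℝ, (∀ i, 0 ≤ x i) → (∑ i ∈ Finset.range t, x i) = 1 →
          (d : ℝ) / ((d : ℝ) + 1) - δ ≤ pPoly 2 G x →
          ∃ I : Finset ℕ, I ⊆ Finset.range t ∧ I.card ≤ d + 1 ∧
            1 - ε ≤ ∑ i ∈ I, x i := by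
  intro d
  induction d using Nat.strong_induction_on with
  | _ d ih =>
    intro hd ε hε0 hε1
    rcases Nat.lt_or_ge d 2 with hd2 | hd2
    · have hd1 : d = 1 := by omega
      subst hd1
      refine ⟨ε/2, by positivity, ?_⟩
      intro t G huni hsub hmad x hx hxsum hp
      exact stabBase ε hε0 hε1 t G huni hsub hmad x hx hxsum hp
    · obtain ⟨δ', hδ'0, hδ'main⟩ :=
        ih (d-1) (by omega) (by omega) (ε/4) (by positivity) (by linarith)
      have hK2 : (2:ℝ) ≤ (d:ℝ) := by exact_mod_cast hd2
      have hK0 : (0:ℝ) < (d:ℝ) := by linarith only [hK2]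
      refine ⟨min (δ'/(36*(d:ℝ))) (min (ε^2/(48*(d:ℝ))) (1/(324*(d:ℝ)))),
        lt_min (by positivity) (lt_min (by positivity) (by positivity)), ?_⟩
      intro t G huni hsub hmad x hx hxsum hp
      set δ := min (δ'/(36*(d:ℝ))) (min (ε^2/(48*(d:ℝ))) (1/(324*(d:ℝ)))) with hδdef
      have hδ0 : 0 < δ := lt_min (by positivity) (lt_min (by positivity) (by positivity))
      have hδ1 : δ ≤ δ'/(36*(d:ℝ)) := min_le_left _ _
      have hδ2 : δ ≤ ε^2/(48*(d:ℝ)) := le_trans (min_le_right _ _) (min_le_left _ _)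
      have hδ3 : δ ≤ 1/(324*(d:ℝ)) := le_trans (min_le_right _ _) (min_le_right _ _)
      have hcastd : ((d-1 : ℕ) : ℝ) = (d:ℝ) - 1 := by
        rw [Nat.cast_sub (by omega : 1 ≤ d)]; norm_num
      have hpp : pPoly 2 G x = 2 * ∑ e ∈ G, ∏ i ∈ e, x i := by
        unfold pPoly; norm_num [Nat.factorial]
      have hvertsub : hverts G ⊆ Finset.range t := by
        intro i hi
        obtain ⟨e, he, hie⟩ := mem_hverts.mp hi
        exact hsub e he hie
      have ht : (Finset.range t).Nonempty := by
        rcases Finset.eq_empty_or_nonempty (Finset.range t) with h | h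
        · rw [h, Finset.sum_empty] at hxsum; norm_num at hxsum
        · exact h
      obtain ⟨v, hvR, hvmax⟩ := Finset.exists_max_image (Finset.range t) x ht
      have hsumverts : ∑ i ∈ hverts G, x i ≤ 1 := by
        rw [← hxsum]
        exact Finset.sum_le_sum_of_subset_of_nonneg hvertsub (fun i _ _ => hx i)
      have hT1 := T1 d G huni hmad _ x hx rfl
      have hperedge : ∀ e ∈ G, ∏ i ∈ e, x i ≤ x v * minw x e := by
        intro e he
        obtain ⟨i, j, hij, rfl⟩ := pair_of_edge huni he
        have hia : x i ≤ x v := hvmax i (hsub _ he (by simp))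
        have hja : x j ≤ x v := hvmax j (hsub _ he (by simp))
        rw [Finset.prod_pair hij, minw_pair hij]
        rcases le_total (x i) (x j) with h | h
        · rw [min_eq_left h, mul_comm (x v) (x i)]
          exact mul_le_mul_of_nonneg_left hja (hx i)
        · rw [min_eq_right h]
          exact mul_le_mul_of_nonneg_right hia (hx j)
      have hxv0 : 0 ≤ x v := hx v
      have hpa : pPoly 2 G x ≤ (d:ℝ) * x v := by
        rw [hpp]
        calc 2 * ∑ e ∈ G, ∏ i ∈ e, x i ≤ 2 * ∑ e ∈ G, x v * minw x e := by
              apply mul_le_mul_of_nonneg_left (Finset.sum_le_sum hperedge) (by norm_num)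
          _ = x v * (2 * ∑ e ∈ G, minw x e) := by rw [← Finset.mul_sum]; ring
          _ ≤ x v * ((d:ℝ) * ∑ i ∈ hverts G, x i) := mul_le_mul_of_nonneg_left hT1 hxv0
          _ ≤ x v * ((d:ℝ) * 1) := by
              apply mul_le_mul_of_nonneg_left _ hxv0
              exact mul_le_mul_of_nonneg_left hsumverts (by positivity)
          _ = (d:ℝ) * x v := by ring
      set Nv := nbr G v with hNvdef
      have hvN : v ∉ Nv := not_mem_nbr G v
      have hNsub : Nv ⊆ Finset.range t := (nbr_subset_hverts G v).trans hvertsub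
      have hins : insert v Nv ⊆ Finset.range t := Finset.insert_subset hvR hNsub
      set R := Finset.range t \ insert v Nv with hRdef
      have haur : x v + (∑ j ∈ Nv, x j) + (∑ i ∈ R, x i) = 1 := by
        have h1 : ∑ i ∈ R, x i = 1 - (x v + ∑ j ∈ Nv, x j) := by
          rw [hRdef, Finset.sum_sdiff_eq_sub hins, hxsum, Finset.sum_insert hvN]
        linarith only [h1]
      have hu0 : 0 ≤ ∑ j ∈ Nv, x j := Finset.sum_nonneg fun j _ => hx j
      have hr0 : 0 ≤ ∑ i ∈ R, x i := Finset.sum_nonneg fun i _ => hx i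
      set G1 := G.filter (fun e => ¬ v ∈ e) with hG1def
      set GN := G1.filter (fun e => e ⊆ Nv) with hGNdef
      set G2 := G1.filter (fun e => ¬ e ⊆ Nv) with hG2def
      set GRR := G2.filter (fun e => e ⊆ R) with hGRRdef
      set GC := G2.filter (fun e => ¬ e ⊆ R) with hGCdef
      have hsplit1 : ∑ e ∈ G, ∏ i ∈ e, x i
          = ∑ e ∈ G.filter (fun e => v ∈ e), ∏ i ∈ e, x i + ∑ e ∈ G1, ∏ i ∈ e, x i := by
        rw [hG1def]
        exact (Finset.sum_filter_add_sum_filter_not G (fun e => v ∈ e) _).symm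
      have hsplit2 : ∑ e ∈ G1, ∏ i ∈ e, x i
          = ∑ e ∈ GN, ∏ i ∈ e, x i + ∑ e ∈ G2, ∏ i ∈ e, x i := by
        rw [hGNdef, hG2def]
        exact (Finset.sum_filter_add_sum_filter_not G1 (fun e => e ⊆ Nv) _).symm
      have hsplit3 : ∑ e ∈ G2, ∏ i ∈ e, x i
          = ∑ e ∈ GRR, ∏ i ∈ e, x i + ∑ e ∈ GC, ∏ i ∈ e, x i := by
        rw [hGRRdef, hGCdef]
        exact (Finset.sum_filter_add_sum_filter_not G2 (fun e => e ⊆ R) _).symm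
      have hPv : ∑ e ∈ G.filter (fun e => v ∈ e), ∏ i ∈ e, x i
          = x v * ∑ j ∈ Nv, x j := sum_edges_at_eq huni v x
      have hG1sub : G1 ⊆ G := Finset.filter_subset _ _
      have hGNsubG : GN ⊆ G := (Finset.filter_subset _ _).trans hG1sub
      have hG2sub : G2 ⊆ G := (Finset.filter_subset _ _).trans hG1sub
      have hGRRsubG : GRR ⊆ G := (Finset.filter_subset _ _).trans hG2sub
      have hGCsubG : GC ⊆ G := (Finset.filter_subset _ _).trans hG2sub
      have hGNuniform : Uniform 2 GN := fun e he => huni e (hGNsubG he)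
      have hGNnbr : ∀ e ∈ GN, e ⊆ Nv := fun e he => (Finset.mem_filter.mp he).2
      have hmadGN : ∀ H : HG, H ⊆ GN → H.Nonempty →
          2 * (H.card : ℝ) ≤ ((d:ℝ) - 1) * ((hverts H).card : ℝ) :=
        fun H hH hne => mad_nbr huni hmad v H (hH.trans hGNsubG)
          (fun e he => hGNnbr e (hH he)) hne
      have hmadGN' : ∀ H : HG, H ⊆ GN → H.Nonempty →
          2 * (H.card : ℝ) ≤ ((d-1 : ℕ) : ℝ) * ((hverts H).card : ℝ) := by
        intro H hH hne
        rw [hcastd]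
        exact hmadGN H hH hne
      have hcoefnn : (0:ℝ) ≤ 1 - 1/(d:ℝ) := by
        rw [sub_nonneg, div_le_one hK0]; linarith only [hK2]
      have hhvGN : ∑ i ∈ hverts GN, x i ≤ ∑ j ∈ Nv, x j := by
        apply Finset.sum_le_sum_of_subset_of_nonneg _ (fun i _ _ => hx i)
        intro i hi
        obtain ⟨e, he, hie⟩ := mem_hverts.mp hi
        exact hGNnbr e he hie
      have hPNup : 2 * ∑ e ∈ GN, ∏ i ∈ e, x i
          ≤ (1 - 1/(d:ℝ)) * (∑ j ∈ Nv, x j)^2 := by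
        have hMS := MS (d-1) GN hGNuniform hmadGN' x hx
        have hco : (1:ℝ) - 1/(((d-1 : ℕ):ℝ)+1) = 1 - 1/(d:ℝ) := by
          rw [hcastd]; ring_nf
        rw [hco] at hMS
        calc 2 * ∑ e ∈ GN, ∏ i ∈ e, x i
            ≤ (1 - 1/(d:ℝ)) * (∑ i ∈ hverts GN, x i)^2 := hMS
          _ ≤ (1 - 1/(d:ℝ)) * (∑ j ∈ Nv, x j)^2 := by
              apply mul_le_mul_of_nonneg_left _ hcoefnn
              exact pow_le_pow_left₀ (Finset.sum_nonneg fun i _ => hx i) hhvGN 2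
      have hGCprops : ∀ e ∈ GC, e ∈ G ∧ v ∉ e ∧ ¬ e ⊆ Nv ∧ ¬ e ⊆ R := by
        intro e he
        rw [hGCdef] at he
        obtain ⟨he2, hnR⟩ := Finset.mem_filter.mp he
        rw [hG2def] at he2
        obtain ⟨he1, hnN⟩ := Finset.mem_filter.mp he2
        rw [hG1def] at he1
        obtain ⟨heG, hnv⟩ := Finset.mem_filter.mp he1
        exact ⟨heG, hnv, hnN, hnR⟩
      have hPC : ∑ e ∈ GC, ∏ i ∈ e, x i ≤ (∑ i ∈ R, x i) * (∑ j ∈ Nv, x j) := by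
        have hGCcover : GC ⊆ R.biUnion (fun w => GC.filter (fun e => w ∈ e)) := by
          intro e he
          obtain ⟨heG, hnv, hnN, hnR⟩ := hGCprops e he
          obtain ⟨w, hwe, hwN⟩ := Finset.not_subset.mp hnN
          have hwv : w ≠ v := fun h => hnv (h ▸ hwe)
          have hwR : w ∈ R := by
            rw [hRdef]
            refine Finset.mem_sdiff.mpr ⟨hsub e heG hwe, ?_⟩
            intro hmem
            rcases Finset.mem_insert.mp hmem with h | h
            · exact hwv h
            · exact hwN h
          exact Finset.mem_biUnion.mpr ⟨w, hwR, Finset.mem_filter.mpr ⟨he, hwe⟩⟩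
        calc ∑ e ∈ GC, ∏ i ∈ e, x i
            ≤ ∑ w ∈ R, ∑ e ∈ GC.filter (fun e => w ∈ e), ∏ i ∈ e, x i :=
              sum_le_biUnion (fun e => Finset.prod_nonneg fun i _ => hx i) hGCcover
          _ ≤ ∑ w ∈ R, x w * ∑ j ∈ Nv, x j := by
              apply Finset.sum_le_sum
              intro w hwR
              apply inner_bound huni hGCsubG w ?_ hx
              intro e he hwe j hj
              obtain ⟨heG, hnv, hnN, hnR⟩ := hGCprops e he
              have hje : j ∈ e := Finset.mem_of_mem_erase hj
              have hjw : j ≠ w := (Finset.mem_erase.mp hj).1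
              have hjv : j ≠ v := fun h => hnv (h ▸ hje)
              have hjR : j ∉ R := by
                intro hjR
                apply hnR
                have hepair : e = {w, j} :=
                  eq_pair_of_two_mem (huni e heG) hwe hje (Ne.symm hjw)
                rw [hepair]
                intro i hi
                rcases Finset.mem_insert.mp hi with rfl | hi
                · exact hwR
                · exact (Finset.mem_singleton.mp hi) ▸ hjR
              by_contra hjN
              apply hjR
              rw [hRdef]
              refine Finset.mem_sdiff.mpr ⟨hsub e heG hje, ?_⟩
              intro hmem
              rcases Finset.mem_insert.mp hmem with h | h
              · exact hjv h
              · exact hjN h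
          _ = (∑ i ∈ R, x i) * (∑ j ∈ Nv, x j) := by rw [← Finset.sum_mul]
      have hPRR : 2 * ∑ e ∈ GRR, ∏ i ∈ e, x i ≤ (∑ i ∈ R, x i)^2 := by
        have hGRRsubR : ∀ e ∈ GRR, e ⊆ R := by
          intro e he
          rw [hGRRdef] at he
          exact (Finset.mem_filter.mp he).2
        have hswap := sum_filter_swap R GRR (fun e => ∏ i ∈ e, x i)
        have hswap2 : ∑ w ∈ R, ∑ e ∈ GRR.filter (fun e => w ∈ e), ∏ i ∈ e, x i
            = 2 * ∑ e ∈ GRR, ∏ i ∈ e, x i := by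
          rw [hswap, Finset.mul_sum]
          apply Finset.sum_congr rfl
          intro e he
          have hfe : R.filter (fun w => w ∈ e) = e := by
            ext w
            simp only [Finset.mem_filter]
            exact ⟨fun h => h.2, fun h => ⟨hGRRsubR e he h, h⟩⟩
          rw [hfe, huni e (hGRRsubG he)]
          norm_num
        rw [← hswap2]
        calc ∑ w ∈ R, ∑ e ∈ GRR.filter (fun e => w ∈ e), ∏ i ∈ e, x i
            ≤ ∑ w ∈ R, x w * ∑ i ∈ R, x i := by
              apply Finset.sum_le_sum
              intro w hwR
              apply inner_bound huni hGRRsubG w ?_ hx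
              intro e he hwe j hj
              exact hGRRsubR e he (Finset.mem_of_mem_erase hj)
          _ = (∑ i ∈ R, x i)^2 := by rw [← Finset.sum_mul]; ring
      have hβ : pPoly 2 G x ≤ 2*(x v * ∑ j ∈ Nv, x j)
          + (1 - 1/(d:ℝ))*(∑ j ∈ Nv, x j)^2
          + 2*((∑ i ∈ R, x i) * (∑ j ∈ Nv, x j)) + (∑ i ∈ R, x i)^2 := by
        rw [hpp, hsplit1, hsplit2, hsplit3, hPv]
        linarith only [hPNup, hPC, hPRR]
      have hζ : pPoly 2 G x - 2*(x v * ∑ j ∈ Nv, x j)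
          - 2*((∑ i ∈ R, x i) * (∑ j ∈ Nv, x j)) - (∑ i ∈ R, x i)^2
          ≤ 2 * ∑ e ∈ GN, ∏ i ∈ e, x i := by
        rw [hpp, hsplit1, hsplit2, hsplit3, hPv]
        linarith only [hPC, hPRR]
      obtain ⟨hrε, hu2, hPz⟩ := arith_main hK2 hδ0 hδ'0 hδ1 hδ2 hδ3 hε0 hε1
        hxv0 hu0 hr0 haur hp hpa hβ hζ
      have hupos : (0:ℝ) < ∑ j ∈ Nv, x j := by linarith only [hu2]
      set z : ℕ → ℝ := fun i => if i ∈ Nv then x i / (∑ j ∈ Nv, x j) else 0 with hzdef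
      have hz0 : ∀ i, 0 ≤ z i := by
        intro i
        simp only [hzdef]
        split
        · exact div_nonneg (hx i) hupos.le
        · exact le_rfl
      have hzsum : ∑ i ∈ Finset.range t, z i = 1 := by
        simp only [hzdef]
        rw [Finset.sum_ite_mem, Finset.inter_eq_right.mpr hNsub, ← Finset.sum_div]
        exact div_self (ne_of_gt hupos)
      have hzprod : pPoly 2 GN z
          = (2 * ∑ e ∈ GN, ∏ i ∈ e, x i) / (∑ j ∈ Nv, x j)^2 := by
        have hper : ∀ e ∈ GN, ∏ i ∈ e, z i = (∏ i ∈ e, x i)/(∑ j ∈ Nv, x j)^2 := by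
          intro e he
          have hesub : e ⊆ Nv := hGNnbr e he
          have hcards : e.card = 2 := huni e (hGNsubG he)
          calc ∏ i ∈ e, z i = ∏ i ∈ e, (x i / (∑ j ∈ Nv, x j)) := by
                apply Finset.prod_congr rfl
                intro i hi
                simp only [hzdef]
                rw [if_pos (hesub hi)]
            _ = (∏ i ∈ e, x i) / (∏ _i ∈ e, (∑ j ∈ Nv, x j)) :=
                Finset.prod_div_distrib _ _
            _ = (∏ i ∈ e, x i) / (∑ j ∈ Nv, x j)^2 := by
                rw [Finset.prod_const, hcards]
        have hppGN : pPoly 2 GN z = 2 * ∑ e ∈ GN, ∏ i ∈ e, z i := by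
          unfold pPoly; norm_num [Nat.factorial]
        rw [hppGN, Finset.sum_congr rfl hper, ← Finset.sum_div]
        ring
      have hinner : ((d-1:ℕ):ℝ)/(((d-1:ℕ):ℝ)+1) - δ' ≤ pPoly 2 GN z := by
        rw [hzprod, hcastd]
        have hKne : (d:ℝ) ≠ 0 := ne_of_gt hK0
        have hfrac : ((d:ℝ)-1)/(((d:ℝ)-1)+1) = 1 - 1/(d:ℝ) := by
          field_simp
          rw [sub_add_cancel]; exact mul_div_cancel_left₀ _ hKne
        rw [hfrac]
        exact hPz
      obtain ⟨J, hJsub, hJcard, hJge⟩ := hδ'main t GN hGNuniform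
        (fun e he => hsub e (hGNsubG he)) hmadGN' z hz0 hzsum hinner
      refine ⟨insert v J, Finset.insert_subset hvR hJsub, ?_, ?_⟩
      · have h1 := Finset.card_insert_le v J
        omega
      · have hvJ : insert v J = insert v (J.erase v) := by
          ext i
          simp only [Finset.mem_insert, Finset.mem_erase]
          constructor
          · rintro (rfl | h)
            · exact Or.inl rfl
            · by_cases hiv : i = v
              · exact Or.inl hiv
              · exact Or.inr ⟨hiv, h⟩
          · rintro (rfl | ⟨_, h⟩)
            · exact Or.inl rfl
            · exact Or.inr h
        have hzv : z v = 0 := by simp only [hzdef]; rw [if_neg hvN]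
        have hzJ : ∑ i ∈ J.erase v, z i = ∑ i ∈ J, z i := Finset.sum_erase J hzv
        have hxz : ∀ i ∈ J.erase v, (∑ j ∈ Nv, x j) * z i ≤ x i := by
          intro i _
          simp only [hzdef]
          split
          · have heq : (∑ j ∈ Nv, x j) * (x i / (∑ j ∈ Nv, x j)) = x i := by
              field_simp
            exact le_of_eq heq
          · simpa using hx i
        have h1 : (∑ j ∈ Nv, x j) * ∑ i ∈ J.erase v, z i ≤ ∑ i ∈ J.erase v, x i := by
          rw [Finset.mul_sum]
          exact Finset.sum_le_sum hxz
        have h2 : 1 - ε/4 ≤ ∑ i ∈ J.erase v, z i := by rw [hzJ]; exact hJge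
        have h3 : (∑ j ∈ Nv, x j) * (1 - ε/4)
            ≤ (∑ j ∈ Nv, x j) * ∑ i ∈ J.erase v, z i :=
          mul_le_mul_of_nonneg_left h2 hupos.le
        have hu1 : ∑ j ∈ Nv, x j ≤ 1 := by linarith only [haur, hxv0, hr0]
        have hprod : 0 ≤ (ε/4)*(1 - ∑ j ∈ Nv, x j) :=
          mul_nonneg (by positivity) (by linarith only [hu1])
        have heq4 : (∑ j ∈ Nv, x j) * (1 - ε/4) - ((∑ j ∈ Nv, x j) - ε/4)
            = (ε/4)*(1 - ∑ j ∈ Nv, x j) := by ring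
        have h4 : (∑ j ∈ Nv, x j) - ε/4 ≤ (∑ j ∈ Nv, x j) * (1 - ε/4) := by
          linarith only [hprod, heq4]
        rw [hvJ, Finset.sum_insert (Finset.notMem_erase v J)]
        linarith only [hrε, h1, h3, h4, haur, hε0.le]

end S17


/-- Stability of the Lagrangian for graphs of bounded maximum
average degree. -/
theorem stmt_17 (d : ℕ) (hd : 0 < d) (ε : ℝ) (hε0 : 0 < ε) (hε1 : ε < 1) :
    ∃ δ : ℝ, 0 < δ ∧
      ∀ t : ℕ, ∀ G : HG, Uniform 2 G → (∀ e ∈ G, e ⊆ Finset.range t) →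
        (∀ H : HG, H ⊆ G → H.Nonempty →
          2 * (H.card : ℝ) ≤ (d : ℝ) * ((hverts H).card : ℝ)) →
        ∀ x : ℕ → ℝ, (∀ i, 0 ≤ x i) → (∑ i ∈ Finset.range t, x i) = 1 →
          (d : ℝ) / ((d : ℝ) + 1) - δ ≤ pPoly 2 G x →
          ∃ I : Finset ℕ, I ⊆ Finset.range t ∧ I.card ≤ d + 1 ∧
            1 - ε ≤ ∑ i ∈ I, x i := by
  exact S17.stabAux d hd ε hε0 hε1
end

section
/- Let k ≥ 3 be an integer and let T be a k-vertex tree that satisfies the Erdős–Sós conjecture. For every real 0 < ε < 1 there exists a real δ > 0 such that: if G is a T-free graph on [t] and x = (x_1,…,x_t) is a weight assignment with x_i ≥ 0, ∑_i x_i = 1, and p_G(x) ≥ (k−2)/(k−1) − δ, then there exists I ⊆ [t] with |I| ≤ k−1 such that ∑_{i∈I} x_i ≥ 1 − ε. -/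
open Finset
open scoped BigOperators Classical

lemma mem_hverts {G : HG} {a : ℕ} : a ∈ hverts G ↔ ∃ e ∈ G, a ∈ e := by
  simp [hverts, Finset.mem_sup, id]

lemma copy_mono {F G G' : HG} (h : G ⊆ G') (hc : IsCopyIn F G) : IsCopyIn F G' := by
  obtain ⟨φ, h1, h2⟩ := hc
  exact ⟨φ, h1, fun e he => h (h2 e he)⟩

lemma pair_eq_of_mem {e : Finset ℕ} (h2 : e.card = 2) {a b : ℕ} (ha : a ∈ e) (hb : b ∈ e)
    (hab : a ≠ b) : e = ({a, b} : Finset ℕ) := by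
  refine (Finset.eq_of_subset_of_card_le ?_ ?_).symm
  · intro z hz
    simp only [Finset.mem_insert, Finset.mem_singleton] at hz
    rcases hz with rfl | rfl <;> assumption
  · rw [h2, Finset.card_pair hab]

/-- L1: a tree on `k ≥ 3` vertices has two distinct nonadjacent vertices. -/
lemma tree_nonadj {k : ℕ} (hk : 3 ≤ k) {T : HG} (hT : IsTreeGraph T k) :
    ∃ p₁ p₂ : ℕ, p₁ ∈ hverts T ∧ p₂ ∈ hverts T ∧ p₁ ≠ p₂ ∧ ({p₁, p₂} : Finset ℕ) ∉ T := by
  obtain ⟨hU, hcard, hcnt, -⟩ := hT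
  have hchoose : k - 1 < k.choose 2 := by
    have h1 : k = (k - 1) + 1 := by omega
    have h2 : k.choose 2 = (k-1).choose 1 + (k-1).choose 2 := by
      conv_lhs => rw [h1]
      rfl
    have h3 : 1 ≤ (k-1).choose 2 := Nat.choose_pos (by omega)
    rw [h2, Nat.choose_one_right]
    omega
  have hns : ¬ ((hverts T).powersetCard 2 ⊆ T) := by
    intro hsub
    have := Finset.card_le_card hsub
    rw [Finset.card_powersetCard, hcard] at this
    omega
  obtain ⟨s, hs1, hs2⟩ := Finset.not_subset.mp hns
  rw [Finset.mem_powersetCard] at hs1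
  obtain ⟨hsub, hc2⟩ := hs1
  obtain ⟨a, b, hab, rfl⟩ := Finset.card_eq_two.mp hc2
  exact ⟨a, b, hsub (by simp), hsub (by simp), hab, hs2⟩


/-- L2: embedding `T` into `K_{k-2} ∨ I₂`. -/
lemma embed_lemma {k : ℕ} (hk : 3 ≤ k) {T : HG} (hT : IsTreeGraph T k) {G : HG}
    (W : Finset ℕ) (hWc : W.card = k - 2)
    (hWadj : ∀ w ∈ W, ∀ w' ∈ W, w ≠ w' → ({w, w'} : Finset ℕ) ∈ G)
    (v₁ v₂ : ℕ) (hv1 : v₁ ∉ W) (hv2 : v₂ ∉ W) (hne : v₁ ≠ v₂)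
    (hadj1 : ∀ w ∈ W, ({v₁, w} : Finset ℕ) ∈ G)
    (hadj2 : ∀ w ∈ W, ({v₂, w} : Finset ℕ) ∈ G) :
    IsCopyIn T G := by
  classical
  obtain ⟨p₁, p₂, hp1, hp2, hpne, hpnadj⟩ := tree_nonadj hk hT
  obtain ⟨hTU, hTcard, -, -⟩ := hT
  set rest : Finset ℕ := ((hverts T).erase p₁).erase p₂ with hrest
  have hp2' : p₂ ∈ (hverts T).erase p₁ := Finset.mem_erase.mpr ⟨hpne.symm, hp2⟩
  have hrcard : rest.card = k - 2 := by
    rw [hrest, Finset.card_erase_of_mem hp2', Finset.card_erase_of_mem hp1, hTcard]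
    omega
  have hcards : rest.card = W.card := by rw [hrcard, hWc]
  set g := Finset.equivOfCardEq hcards with hg
  set φ : ℕ → ℕ := fun z =>
    if z = p₁ then v₁ else if z = p₂ then v₂ else
      if h : z ∈ rest then (g ⟨z, h⟩ : ℕ) else z with hφ
  have hφ1 : φ p₁ = v₁ := by simp [hφ]
  have hφ2 : φ p₂ = v₂ := by simp [hφ, hpne.symm]
  have hφr : ∀ z (h : z ∈ rest), φ z = (g ⟨z, h⟩ : ℕ) := by
    intro z h
    have h1 : z ≠ p₁ := (Finset.mem_erase.mp (Finset.mem_of_mem_erase h)).1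
    have h2 : z ≠ p₂ := (Finset.mem_erase.mp h).1
    simp [hφ, h1, h2, h]
  have hφrW : ∀ z (h : z ∈ rest), φ z ∈ W := fun z h => by
    rw [hφr z h]; exact (g ⟨z, h⟩).2
  have hcases : ∀ z ∈ hverts T, z = p₁ ∨ z = p₂ ∨ z ∈ rest := by
    intro z hz
    by_cases h1 : z = p₁
    · exact Or.inl h1
    by_cases h2 : z = p₂
    · exact Or.inr (Or.inl h2)
    exact Or.inr (Or.inr (Finset.mem_erase.mpr ⟨h2, Finset.mem_erase.mpr ⟨h1, hz⟩⟩))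
  have hginj : ∀ z z' (h : z ∈ rest) (h' : z' ∈ rest),
      (g ⟨z, h⟩ : ℕ) = (g ⟨z', h'⟩ : ℕ) → z = z' := by
    intro z z' h h' he
    have := g.injective (Subtype.ext he)
    exact congrArg Subtype.val this
  have hinj : Set.InjOn φ (hverts T : Set ℕ) := by
    intro a ha b hb hab
    simp only [Finset.mem_coe] at ha hb
    rcases hcases a ha with rfl | rfl | haR <;> rcases hcases b hb with rfl | rfl | hbR
    · rfl
    · rw [hφ1, hφ2] at hab; exact absurd hab hne
    · have hw := hφrW b hbR; rw [← hab, hφ1] at hw; exact absurd hw hv1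
    · rw [hφ2, hφ1] at hab; exact absurd hab.symm hne
    · rfl
    · have hw := hφrW b hbR; rw [← hab, hφ2] at hw; exact absurd hw hv2
    · have hw := hφrW a haR; rw [hab, hφ1] at hw; exact absurd hw hv1
    · have hw := hφrW a haR; rw [hab, hφ2] at hw; exact absurd hw hv2
    · rw [hφr a haR, hφr b hbR] at hab; exact hginj a b haR hbR hab
  refine ⟨φ, hinj, ?_⟩
  intro e he
  obtain ⟨a, b, hab, rfl⟩ := Finset.card_eq_two.mp (hTU e he)
  have haV : a ∈ hverts T := mem_hverts.mpr ⟨_, he, by simp⟩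
  have hbV : b ∈ hverts T := mem_hverts.mpr ⟨_, he, by simp⟩
  have himg : ({a, b} : Finset ℕ).image φ = {φ a, φ b} := by
    simp [Finset.image_insert, Finset.image_singleton]
  rw [himg]
  have hWadj' : ∀ z z' (h : z ∈ rest) (h' : z' ∈ rest), z ≠ z' →
      ({φ z, φ z'} : Finset ℕ) ∈ G := by
    intro z z' h h' hzz
    refine hWadj _ (hφrW z h) _ (hφrW z' h') ?_
    intro hc
    exact hzz (hginj z z' h h' (by rw [hφr z h, hφr z' h'] at hc; exact hc))
  rcases hcases a haV with rfl | rfl | haR <;> rcases hcases b hbV with rfl | rfl | hbR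
  · exact absurd rfl hab
  · exact absurd he hpnadj
  · rw [hφ1]; exact hadj1 _ (hφrW b hbR)
  · rw [Finset.pair_comm] at he; exact absurd he hpnadj
  · exact absurd rfl hab
  · rw [hφ2]; exact hadj2 _ (hφrW b hbR)
  · rw [hφ1, Finset.pair_comm]; exact hadj1 _ (hφrW a haR)
  · rw [hφ2, Finset.pair_comm]; exact hadj2 _ (hφrW a haR)
  · exact hWadj' a b haR hbR hab


/-- L3: any `T`-free graph has at most `|V| * (k-2) / 2` edges. -/
lemma es_subgraph {k : ℕ} {T : HG} (hES : SatisfiesES T k)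
    {H : HG} (hU : Uniform 2 H) (hfree : ¬ IsCopyIn T H) :
    2 * H.card ≤ (hverts H).card * (k - 2) := by
  classical
  set n := (hverts H).card with hn
  have hcful : (hverts H).card = (Finset.range n).card := by rw [Finset.card_range]
  set σ := Finset.equivOfCardEq hcful with hσ
  set σf : ℕ → ℕ := fun v => if h : v ∈ hverts H then (σ ⟨v, h⟩ : ℕ) else 0 with hσf
  set τf : ℕ → ℕ := fun w => if h : w ∈ Finset.range n then ((σ.symm ⟨w, h⟩ : ℕ)) else 0 with hτf
  have hσmem : ∀ v (h : v ∈ hverts H), σf v ∈ Finset.range n := by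
    intro v h; rw [hσf]; simp only [dif_pos h]; exact (σ ⟨v, h⟩).2
  have hlinv : ∀ v ∈ hverts H, τf (σf v) = v := by
    intro v h
    rw [hσf]; simp only [dif_pos h]
    rw [hτf]; simp only [dif_pos (σ ⟨v, h⟩).2]
    have : (⟨(σ ⟨v, h⟩ : ℕ), (σ ⟨v, h⟩).2⟩ : {x // x ∈ Finset.range n}) = σ ⟨v, h⟩ :=
      Subtype.ext rfl
    rw [this, Equiv.symm_apply_apply]
  have hrinv : ∀ w ∈ Finset.range n, σf (τf w) = w := by
    intro w h
    rw [hτf]; simp only [dif_pos h]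
    have h2 : ((σ.symm ⟨w, h⟩ : ℕ)) ∈ hverts H := (σ.symm ⟨w, h⟩).2
    rw [hσf]; simp only [dif_pos h2]
    have : (⟨((σ.symm ⟨w, h⟩ : ℕ)), h2⟩ : {x // x ∈ hverts H}) = σ.symm ⟨w, h⟩ :=
      Subtype.ext rfl
    rw [this, Equiv.apply_symm_apply]
  have hsubv : ∀ e ∈ H, e ⊆ hverts H := fun e he a ha => mem_hverts.mpr ⟨e, he, ha⟩
  have hinjσ : Set.InjOn σf (hverts H : Set ℕ) := by
    intro a ha b hb hab
    have := congrArg τf hab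
    rwa [hlinv a ha, hlinv b hb] at this
  set H' : HG := H.image (fun e => e.image σf) with hH'
  have hback : ∀ e ∈ H, (e.image σf).image τf = e := by
    intro e he
    rw [Finset.image_image]
    have : ∀ a ∈ e, (τf ∘ σf) a = id a := fun a ha => hlinv a (hsubv e he ha)
    rw [Finset.image_congr this, Finset.image_id]
  have hU' : Uniform 2 H' := by
    intro e' he'
    obtain ⟨e, he, rfl⟩ := Finset.mem_image.mp he'
    rw [Finset.card_image_of_injOn (Set.InjOn.mono ?_ hinjσ), hU e he]
    exact fun a ha => hsubv e he ha
  have hsub' : ∀ e' ∈ H', e' ⊆ Finset.range n := by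
    intro e' he' w hw
    obtain ⟨e, he, rfl⟩ := Finset.mem_image.mp he'
    obtain ⟨a, ha, rfl⟩ := Finset.mem_image.mp hw
    exact hσmem a (hsubv e he ha)
  have hcard' : H'.card = H.card := by
    rw [hH']
    apply Finset.card_image_of_injOn
    intro e₁ h₁ e₂ h₂ he
    dsimp only at he
    rw [← hback e₁ (Finset.mem_coe.mp h₁), ← hback e₂ (Finset.mem_coe.mp h₂), he]
  have hfree' : ¬ IsCopyIn T H' := by
    intro ⟨φ, hinjφ, hmap⟩
    apply hfree
    refine ⟨τf ∘ φ, ?_, ?_⟩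
    · intro a ha b hb hab
      have hφa : φ a ∈ Finset.range n := by
        simp only [Finset.mem_coe] at ha
        obtain ⟨e, he, hae⟩ := mem_hverts.mp ha
        exact hsub' _ (hmap e he) (Finset.mem_image.mpr ⟨a, hae, rfl⟩)
      have hφb : φ b ∈ Finset.range n := by
        simp only [Finset.mem_coe] at hb
        obtain ⟨e, he, hbe⟩ := mem_hverts.mp hb
        exact hsub' _ (hmap e he) (Finset.mem_image.mpr ⟨b, hbe, rfl⟩)
      have : σf ((τf ∘ φ) a) = σf ((τf ∘ φ) b) := congrArg σf hab
      rw [Function.comp_apply, Function.comp_apply, hrinv _ hφa, hrinv _ hφb] at this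
      exact hinjφ ha hb this
    · intro e he
      have h1 : e.image (τf ∘ φ) = (e.image φ).image τf := by rw [Finset.image_image]
      rw [h1]
      obtain ⟨h, hh, hhe⟩ := Finset.mem_image.mp (hmap e he)
      rw [← hhe, hback h hh]
      exact hh
  have hmem : H.card ∈ {m : ℕ | ∃ G : HG, Uniform 2 G ∧ (∀ e ∈ G, e ⊆ Finset.range n) ∧
      (¬ IsCopyIn T G) ∧ G.card = m} := ⟨H', hU', hsub', hfree', hcard'⟩
  have hbdd : BddAbove {m : ℕ | ∃ G : HG, Uniform 2 G ∧ (∀ e ∈ G, e ⊆ Finset.range n) ∧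
      (¬ IsCopyIn T G) ∧ G.card = m} := by
    refine ⟨((Finset.range n).powersetCard 2).card, ?_⟩
    rintro m ⟨G, hGU, hGsub, -, rfl⟩
    apply Finset.card_le_card
    intro e he
    exact Finset.mem_powersetCard.mpr ⟨hGsub e he, hGU e he⟩
  have hle : H.card ≤ exNum 2 n (fun G => ¬ IsCopyIn T G) := le_csSup hbdd hmem
  calc 2 * H.card ≤ 2 * exNum 2 n (fun G => ¬ IsCopyIn T G) := by omega
    _ ≤ n * (k - 2) := hES n


/-- Degree-sum identity. -/
lemma deg_sum {H : HG} (hU : Uniform 2 H) (S : Finset ℕ) (hS : ∀ e ∈ H, e ⊆ S) :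
    ∑ v ∈ S, (H.filter (fun e => v ∈ e)).card = 2 * H.card := by
  classical
  have h1 : ∀ v ∈ S, (H.filter (fun e => v ∈ e)).card = ∑ e ∈ H, if v ∈ e then 1 else 0 := by
    intro v _
    rw [Finset.card_filter]
  rw [Finset.sum_congr rfl h1, Finset.sum_comm]
  have h2 : ∀ e ∈ H, (∑ v ∈ S, if v ∈ e then 1 else 0) = 2 := by
    intro e he
    rw [← Finset.card_filter]
    have : S.filter (fun v => v ∈ e) = e := by
      ext v
      simp only [Finset.mem_filter]
      exact ⟨fun h => h.2, fun h => ⟨hS e he h, h⟩⟩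
    rw [this, hU e he]
  rw [Finset.sum_congr rfl h2, Finset.sum_const, smul_eq_mul, Nat.mul_comm]

/-- L4: existence of a low degree vertex. -/
lemma exists_low_deg {k : ℕ} (hk : 3 ≤ k) {T : HG} (hES : SatisfiesES T k)
    {H : HG} (hU : Uniform 2 H) (hfree : ¬ IsCopyIn T H)
    (S : Finset ℕ) (hS : ∀ e ∈ H, e ⊆ S) (hne : S.Nonempty) :
    ∃ v ∈ S, (H.filter (fun e => v ∈ e)).card ≤ k - 2 := by
  by_contra hcon
  push_neg at hcon
  have hlow : ∀ v ∈ S, k - 2 + 1 ≤ (H.filter (fun e => v ∈ e)).card := fun v hv => hcon v hv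
  have h1 : S.card * (k - 2 + 1) ≤ ∑ v ∈ S, (H.filter (fun e => v ∈ e)).card := by
    have := Finset.card_nsmul_le_sum S (fun v => (H.filter (fun e => v ∈ e)).card) (k - 2 + 1) hlow
    simpa [smul_eq_mul] using this
  rw [deg_sum hU S hS] at h1
  have h2 : 2 * H.card ≤ (hverts H).card * (k - 2) := es_subgraph hES hU hfree
  have h3 : (hverts H).card ≤ S.card := by
    apply Finset.card_le_card
    intro a ha
    obtain ⟨e, he, hae⟩ := mem_hverts.mp ha
    exact hS e he hae
  have h4 : S.card * (k - 2 + 1) ≤ S.card * (k - 2) := by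
    calc S.card * (k - 2 + 1) ≤ 2 * H.card := h1
      _ ≤ (hverts H).card * (k - 2) := h2
      _ ≤ S.card * (k - 2) := Nat.mul_le_mul_right _ h3
  have h5 : 0 < S.card := Finset.card_pos.mpr hne
  have := Nat.le_of_mul_le_mul_left h4 h5
  omega
/-- L5: greedy coloring. -/
lemma exists_coloring {k : ℕ} (hk : 3 ≤ k) {T : HG} (hES : SatisfiesES T k)
    {G : HG} (hU : Uniform 2 G) (hfree : ¬ IsCopyIn T G) (S : Finset ℕ) :
    ∃ f : ℕ → Fin (k-1), ∀ e ∈ G, e ⊆ S → ∀ u ∈ e, ∀ v ∈ e, u ≠ v → f u ≠ f v := by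
  classical
  have hm : 0 < k - 1 := by omega
  induction S using Finset.strongInduction with
  | _ S IH =>
    rcases Finset.eq_empty_or_nonempty S with rfl | hSne
    · refine ⟨fun _ => ⟨0, hm⟩, ?_⟩
      intro e he hes u hu
      have : e = ∅ := Finset.subset_empty.mp hes
      subst this
      exact absurd hu (Finset.notMem_empty u)
    · set H : HG := G.filter (fun e => e ⊆ S) with hH
      have hUH : Uniform 2 H := fun e he => hU e (Finset.mem_filter.mp he).1
      have hfreeH : ¬ IsCopyIn T H := fun hc => hfree (copy_mono (Finset.filter_subset _ _) hc)
      have hSH : ∀ e ∈ H, e ⊆ S := fun e he => (Finset.mem_filter.mp he).2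
      obtain ⟨v, hvS, hdeg⟩ := exists_low_deg hk hES hUH hfreeH S hSH hSne
      obtain ⟨f', hf'⟩ := IH (S.erase v) (Finset.erase_ssubset hvS)
      set used : Finset (Fin (k-1)) :=
        (H.filter (fun e => v ∈ e)).biUnion (fun e => (e.erase v).image f') with hused
      have husedcard : used.card ≤ k - 2 := by
        calc used.card ≤ ∑ e ∈ H.filter (fun e => v ∈ e), ((e.erase v).image f').card :=
              Finset.card_biUnion_le
          _ ≤ ∑ e ∈ H.filter (fun e => v ∈ e), 1 := by
              apply Finset.sum_le_sum
              intro e he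
              calc ((e.erase v).image f').card ≤ (e.erase v).card := Finset.card_image_le
                _ = 1 := by
                    rw [Finset.card_erase_of_mem (Finset.mem_filter.mp he).2,
                      hUH e (Finset.mem_filter.mp he).1]
          _ = (H.filter (fun e => v ∈ e)).card := by rw [Finset.sum_const, smul_eq_mul, mul_one]
          _ ≤ k - 2 := hdeg
      have hex : ∃ c : Fin (k-1), c ∉ used := by
        by_contra hc
        push_neg at hc
        have : (Finset.univ : Finset (Fin (k-1))) ⊆ used := fun c _ => hc c
        have := Finset.card_le_card this
        rw [Finset.card_univ, Fintype.card_fin] at this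
        omega
      obtain ⟨c, hc⟩ := hex
      refine ⟨fun z => if z = v then c else f' z, ?_⟩
      intro e he hes u hu w hw huw
      by_cases hve : v ∈ e
      · have heH : e ∈ H.filter (fun e => v ∈ e) :=
          Finset.mem_filter.mpr ⟨Finset.mem_filter.mpr ⟨he, hes⟩, hve⟩
        have hcard1 : (e.erase v).card = 1 := by
          rw [Finset.card_erase_of_mem hve, hU e he]
        by_cases huv : u = v
        · subst huv
          have hwv : w ≠ u := huw.symm
          have hwmem : w ∈ e.erase u := Finset.mem_erase.mpr ⟨hwv, hw⟩
          have : f' w ∈ used := Finset.mem_biUnion.mpr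
            ⟨e, heH, Finset.mem_image.mpr ⟨w, hwmem, rfl⟩⟩
          intro hcc
          simp only [if_neg hwv] at hcc
          norm_num at hcc
          exact hc (hcc ▸ this)
        · by_cases hwv : w = v
          · subst hwv
            have humem : u ∈ e.erase w := Finset.mem_erase.mpr ⟨huv, hu⟩
            have : f' u ∈ used := Finset.mem_biUnion.mpr
              ⟨e, heH, Finset.mem_image.mpr ⟨u, humem, rfl⟩⟩
            intro hcc
            simp only [if_neg huv] at hcc
            norm_num at hcc
            exact hc (hcc.symm ▸ this)
          · exfalso
            have h1 : u ∈ e.erase v := Finset.mem_erase.mpr ⟨huv, hu⟩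
            have h2 : w ∈ e.erase v := Finset.mem_erase.mpr ⟨hwv, hw⟩
            have := Finset.card_le_one.mp (le_of_eq hcard1) u h1 w h2
            exact huw this
      · have hes' : e ⊆ S.erase v := Finset.subset_erase.mpr ⟨hes, hve⟩
        have huv : u ≠ v := fun h => hve (h ▸ hu)
        have hwv : w ≠ v := fun h => hve (h ▸ hw)
        simp only [if_neg huv, if_neg hwv]
        exact hf' e he hes' u hu w hw huw


/-- L6: sparse graphs with small vertex weights have small polynomial. -/
lemma smallmax {k : ℕ} (hk : 3 ≤ k) {T : HG} (hES : SatisfiesES T k)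
    (τ : ℝ) (hτ : 0 ≤ τ) (x : ℕ → ℝ) (hx0 : ∀ i, 0 ≤ x i) :
    ∀ H : HG, Uniform 2 H → ¬ IsCopyIn T H → (∀ i ∈ hverts H, x i ≤ τ) →
    ∑ e ∈ H, ∏ i ∈ e, x i ≤ ((k : ℝ) - 2) * τ * ∑ i ∈ hverts H, x i := by
  classical
  intro H
  induction H using Finset.strongInduction with
  | _ H IH =>
    intro hU hfree hsmall
    rcases Finset.eq_empty_or_nonempty H with rfl | hne
    · simp [hverts]
    · have hvne : (hverts H).Nonempty := by
        obtain ⟨e, he⟩ := hne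
        have : e.card = 2 := hU e he
        have : e.Nonempty := Finset.card_pos.mp (by omega)
        obtain ⟨a, ha⟩ := this
        exact ⟨a, mem_hverts.mpr ⟨e, he, ha⟩⟩
      have hsubv : ∀ e ∈ H, e ⊆ hverts H := fun e he a ha => mem_hverts.mpr ⟨e, he, ha⟩
      obtain ⟨v, hv, hdeg⟩ := exists_low_deg hk hES hU hfree (hverts H) hsubv hvne
      set Hv := H.filter (fun e => v ∈ e) with hHv
      set H' := H.filter (fun e => ¬ v ∈ e) with hH'
      have hsplit : ∑ e ∈ Hv, ∏ i ∈ e, x i + ∑ e ∈ H', ∏ i ∈ e, x i = ∑ e ∈ H, ∏ i ∈ e, x i :=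
        Finset.sum_filter_add_sum_filter_not H _ _
      -- bound on Hv
      have hbv : ∑ e ∈ Hv, ∏ i ∈ e, x i ≤ ((k : ℝ) - 2) * τ * x v := by
        have hterm : ∀ e ∈ Hv, ∏ i ∈ e, x i ≤ τ * x v := by
          intro e he
          rw [Finset.mem_filter] at he
          obtain ⟨heH, hve⟩ := he
          obtain ⟨a, b, hab, rfl⟩ := Finset.card_eq_two.mp (hU e heH)
          rw [Finset.prod_pair hab]
          rcases Finset.mem_insert.mp hve with rfl | hvb
          · calc x v * x b ≤ x v * τ := by
                  apply mul_le_mul_of_nonneg_left _ (hx0 v)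
                  exact hsmall b (mem_hverts.mpr ⟨_, heH, by simp⟩)
              _ = τ * x v := by ring
          · have : v = b := Finset.mem_singleton.mp hvb
            subst this
            apply mul_le_mul_of_nonneg_right _ (hx0 v)
            exact hsmall a (mem_hverts.mpr ⟨_, heH, by simp⟩)
        calc ∑ e ∈ Hv, ∏ i ∈ e, x i ≤ Hv.card • (τ * x v) := Finset.sum_le_card_nsmul _ _ _ hterm
          _ = (Hv.card : ℝ) * (τ * x v) := by rw [nsmul_eq_mul]
          _ ≤ ((k : ℝ) - 2) * (τ * x v) := by
              apply mul_le_mul_of_nonneg_right _ (mul_nonneg hτ (hx0 v))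
              have : (Hv.card : ℝ) ≤ ((k - 2 : ℕ) : ℝ) := Nat.cast_le.mpr hdeg
              calc (Hv.card : ℝ) ≤ ((k - 2 : ℕ) : ℝ) := this
                _ = (k : ℝ) - 2 := by
                    have : (2 : ℕ) ≤ k := by omega
                    push_cast [Nat.cast_sub this]
                    ring
          _ = ((k : ℝ) - 2) * τ * x v := by ring
      -- induction on H'
      have hssub : H' ⊂ H := by
        obtain ⟨e, he, hve⟩ : ∃ e ∈ H, v ∈ e := by
          obtain ⟨e, he, hve⟩ := mem_hverts.mp hv
          exact ⟨e, he, hve⟩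
        refine Finset.ssubset_iff_of_subset (Finset.filter_subset _ _) |>.mpr ⟨e, he, ?_⟩
        simp [hH', hve, he]
      have hH'U : Uniform 2 H' := fun e he => hU e (Finset.mem_filter.mp he).1
      have hH'free : ¬ IsCopyIn T H' := fun hc => hfree (copy_mono (Finset.filter_subset _ _) hc)
      have hH'small : ∀ i ∈ hverts H', x i ≤ τ := by
        intro i hi
        obtain ⟨e, he, hie⟩ := mem_hverts.mp hi
        exact hsmall i (mem_hverts.mpr ⟨e, (Finset.mem_filter.mp he).1, hie⟩)
      have hIH := IH H' hssub hH'U hH'free hH'small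
      have hsubV' : hverts H' ⊆ (hverts H).erase v := by
        intro a ha
        obtain ⟨e, he, hae⟩ := mem_hverts.mp ha
        rw [Finset.mem_filter] at he
        refine Finset.mem_erase.mpr ⟨?_, mem_hverts.mpr ⟨e, he.1, hae⟩⟩
        intro h
        exact he.2 (h ▸ hae)
      have hsum' : ∑ i ∈ hverts H', x i ≤ ∑ i ∈ hverts H, x i - x v := by
        calc ∑ i ∈ hverts H', x i ≤ ∑ i ∈ (hverts H).erase v, x i :=
              Finset.sum_le_sum_of_subset_of_nonneg hsubV' (fun i _ _ => hx0 i)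
          _ = ∑ i ∈ hverts H, x i - x v := Finset.sum_erase_eq_sub hv
      have hfinal : ∑ e ∈ H', ∏ i ∈ e, x i ≤ ((k : ℝ) - 2) * τ * (∑ i ∈ hverts H, x i - x v) := by
        calc ∑ e ∈ H', ∏ i ∈ e, x i ≤ ((k : ℝ) - 2) * τ * ∑ i ∈ hverts H', x i := hIH
          _ ≤ ((k : ℝ) - 2) * τ * (∑ i ∈ hverts H, x i - x v) := by
              apply mul_le_mul_of_nonneg_left hsum'
              have h3k : (3 : ℝ) ≤ (k : ℝ) := by exact_mod_cast hk
              apply mul_nonneg (by linarith) hτ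
      linarith

/-- L7: handshake identity. -/
lemma handshake (G : HG) (hU : Uniform 2 G) (V : Finset ℕ) (hSub : ∀ e ∈ G, e ⊆ V)
    (x : ℕ → ℝ) :
    ∑ i ∈ V, x i * ∑ j ∈ V.filter (fun j => ({i, j} : Finset ℕ) ∈ G), x j
      = 2 * ∑ e ∈ G, ∏ i ∈ e, x i := by
  classical
  have key : ∀ e ∈ G, ∑ p ∈ (e ×ˢ e).filter (fun p => p.1 ≠ p.2), x p.1 * x p.2
      = 2 * ∏ i ∈ e, x i := by
    intro e he
    obtain ⟨a, b, hab, rfl⟩ := Finset.card_eq_two.mp (hU e he)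
    have hpe : ((({a,b} : Finset ℕ)) ×ˢ (({a,b} : Finset ℕ))).filter (fun p => p.1 ≠ p.2)
        = ({(a,b), (b,a)} : Finset (ℕ × ℕ)) := by
      ext ⟨u,v⟩
      simp only [Finset.mem_filter, Finset.mem_product, Finset.mem_insert, Finset.mem_singleton,
        Prod.mk.injEq]
      constructor
      · rintro ⟨⟨hu | hu, hv | hv⟩, hne2⟩ <;> subst_vars <;> simp_all
      · rintro (⟨rfl, rfl⟩ | ⟨rfl, rfl⟩) <;> simp [hab, hab.symm]
    rw [hpe, Finset.sum_pair (by simp [hab, Prod.ext_iff] : ((a,b) : ℕ × ℕ) ≠ (b,a)),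
      Finset.prod_pair hab]
    ring
  have hdisj : Set.PairwiseDisjoint (↑G : Set (Finset ℕ))
      (fun e => (e ×ˢ e).filter (fun p : ℕ × ℕ => p.1 ≠ p.2)) := by
    intro e₁ h₁ e₂ h₂ hne
    simp only [Function.onFun]
    rw [Finset.disjoint_left]
    intro p hp1 hp2
    rw [Finset.mem_filter, Finset.mem_product] at hp1 hp2
    have he1 := pair_eq_of_mem (hU e₁ (Finset.mem_coe.mp h₁)) hp1.1.1 hp1.1.2 hp1.2
    have he2 := pair_eq_of_mem (hU e₂ (Finset.mem_coe.mp h₂)) hp2.1.1 hp2.1.2 hp2.2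
    exact hne (he1.trans he2.symm)
  have hP : (V ×ˢ V).filter (fun p : ℕ × ℕ => ({p.1, p.2} : Finset ℕ) ∈ G)
      = G.biUnion (fun e => (e ×ˢ e).filter (fun p : ℕ × ℕ => p.1 ≠ p.2)) := by
    ext ⟨u,v⟩
    simp only [Finset.mem_filter, Finset.mem_product, Finset.mem_biUnion]
    constructor
    · rintro ⟨⟨hu, hv⟩, hG⟩
      refine ⟨{u,v}, hG, ?_⟩
      have huv : u ≠ v := by
        intro h
        subst h
        have := hU _ hG
        simp at this
      exact ⟨⟨by simp, by simp⟩, huv⟩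
    · rintro ⟨e, he, hp⟩
      obtain ⟨⟨hu, hv⟩, hne2⟩ := hp
      have he2 := pair_eq_of_mem (hU e he) hu hv hne2
      exact ⟨⟨hSub e he hu, hSub e he hv⟩, he2 ▸ he⟩
  have lhs_eq : ∑ i ∈ V, x i * ∑ j ∈ V.filter (fun j => ({i, j} : Finset ℕ) ∈ G), x j
      = ∑ p ∈ (V ×ˢ V).filter (fun p : ℕ × ℕ => ({p.1, p.2} : Finset ℕ) ∈ G), x p.1 * x p.2 := by
    rw [Finset.sum_filter, Finset.sum_product]
    refine Finset.sum_congr rfl fun i hi => ?_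
    rw [Finset.sum_filter, Finset.mul_sum]
    refine Finset.sum_congr rfl fun j hj => ?_
    by_cases h : ({i, j} : Finset ℕ) ∈ G <;> simp [h]
  rw [lhs_eq, hP, Finset.sum_biUnion hdisj, Finset.mul_sum]
  exact Finset.sum_congr rfl key


/-- L8: the master inequality. -/
lemma master (m : ℕ) (G : HG) (hU : Uniform 2 G) (t : ℕ)
    (hSub : ∀ e ∈ G, e ⊆ Finset.range t) (x : ℕ → ℝ) (hx0 : ∀ i, 0 ≤ x i)
    (hx1 : ∑ i ∈ Finset.range t, x i = 1)
    (f : ℕ → Fin m) (hf : ∀ e ∈ G, ∀ u ∈ e, ∀ v ∈ e, u ≠ v → f u ≠ f v)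
    (A : Finset (Fin m)) (D : Finset ℕ) (hD : D ⊆ Finset.range t)
    (hDA : ∀ v ∈ D, f v ∉ A)
    (u : ℕ → ℕ)
    (hu : ∀ v ∈ D, u v ∈ Finset.range t ∧ f (u v) ≠ f v ∧ ({v, u v} : Finset ℕ) ∉ G) :
    2 * ∑ e ∈ G, ∏ i ∈ e, x i + ∑ v ∈ D, x v * x (u v) ≤
      1 - (∑ i ∈ (Finset.range t).filter (fun i => f i ∈ A), x i)^2
        - ∑ a ∈ Finset.univ.filter (fun a => a ∉ A),
            (∑ i ∈ (Finset.range t).filter (fun i => f i = a), x i)^2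
        + 2 * ∑ e ∈ G.filter (fun e => e ⊆ (Finset.range t).filter (fun i => f i ∈ A)),
            ∏ i ∈ e, x i := by
  classical
  set R : Finset ℕ := (Finset.range t).filter (fun i => f i ∈ A) with hRdef
  set S : ℝ := ∑ i ∈ R, x i with hSdef
  set Y : Fin m → ℝ := fun a => ∑ i ∈ (Finset.range t).filter (fun i => f i = a), x i with hYdef
  set Nbr : ℕ → Finset ℕ := fun i => (Finset.range t).filter (fun j => ({i, j} : Finset ℕ) ∈ G)
    with hNbr
  set GR : HG := G.filter (fun e => e ⊆ R) with hGR
  set NbrR : ℕ → Finset ℕ :=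
    fun i => (Finset.range t).filter (fun j => ({i, j} : Finset ℕ) ∈ GR) with hNbrR
  -- basic facts
  have hedge_ne : ∀ i j : ℕ, ({i, j} : Finset ℕ) ∈ G → i ≠ j := by
    intro i j hij h
    subst h
    have := hU _ hij
    simp at this
  have hNsub : ∀ i, Nbr i ⊆ (Finset.range t).filter (fun j => ¬ f j = f i) := by
    intro i j hj
    rw [hNbr, Finset.mem_filter] at hj
    rw [Finset.mem_filter]
    refine ⟨hj.1, ?_⟩
    exact hf _ hj.2 j (by simp) i (by simp) (hedge_ne i j hj.2).symm
  have crosssum : ∀ i, ∑ j ∈ (Finset.range t).filter (fun j => ¬ f j = f i), x j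
      = 1 - Y (f i) := by
    intro i
    have h := Finset.sum_filter_add_sum_filter_not (Finset.range t) (fun j => f j = f i) x
    rw [hx1] at h
    rw [hYdef]
    linarith
  -- the handshake
  rw [← handshake G hU (Finset.range t) hSub x]
  -- split range t into R and its complement
  have hsplit := Finset.sum_filter_add_sum_filter_not (Finset.range t) (fun i => f i ∈ A)
    (fun i => x i * ∑ j ∈ Nbr i, x j)
  -- Part Rc
  have hperRc : ∀ i ∈ (Finset.range t).filter (fun i => ¬ f i ∈ A),
      x i * ∑ j ∈ Nbr i, x j
        ≤ x i * (1 - Y (f i)) - (if i ∈ D then x i * x (u i) else 0) := by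
    intro i hi
    by_cases hiD : i ∈ D
    · obtain ⟨hu1, hu2, hu3⟩ := hu i hiD
      have hsub2 : Nbr i ⊆ ((Finset.range t).filter (fun j => ¬ f j = f i)).erase (u i) := by
        intro j hj
        rw [Finset.mem_erase]
        refine ⟨?_, hNsub i hj⟩
        rintro rfl
        rw [hNbr, Finset.mem_filter] at hj
        exact hu3 hj.2
      have hmem : u i ∈ (Finset.range t).filter (fun j => ¬ f j = f i) :=
        Finset.mem_filter.mpr ⟨hu1, hu2⟩
      have h1 : ∑ j ∈ Nbr i, x j
          ≤ ∑ j ∈ ((Finset.range t).filter (fun j => ¬ f j = f i)).erase (u i), x j :=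
        Finset.sum_le_sum_of_subset_of_nonneg hsub2 (fun j _ _ => hx0 j)
      rw [Finset.sum_erase_eq_sub hmem, crosssum i] at h1
      rw [if_pos hiD]
      calc x i * ∑ j ∈ Nbr i, x j ≤ x i * ((1 - Y (f i)) - x (u i)) :=
            mul_le_mul_of_nonneg_left h1 (hx0 i)
        _ = x i * (1 - Y (f i)) - x i * x (u i) := by ring
    · rw [if_neg hiD, sub_zero]
      apply mul_le_mul_of_nonneg_left _ (hx0 i)
      calc ∑ j ∈ Nbr i, x j ≤ ∑ j ∈ (Finset.range t).filter (fun j => ¬ f j = f i), x j :=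
            Finset.sum_le_sum_of_subset_of_nonneg (hNsub i) (fun j _ _ => hx0 j)
        _ = 1 - Y (f i) := crosssum i
  have hRcsum : ∑ i ∈ (Finset.range t).filter (fun i => ¬ f i ∈ A), x i * ∑ j ∈ Nbr i, x j
      ≤ ((1 - S) - ∑ a ∈ Finset.univ.filter (fun a => a ∉ A), (Y a)^2)
        - ∑ v ∈ D, x v * x (u v) := by
    have h1 := Finset.sum_le_sum hperRc
    rw [Finset.sum_sub_distrib] at h1
    have hDsub : D ⊆ (Finset.range t).filter (fun i => ¬ f i ∈ A) := by
      intro v hv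
      exact Finset.mem_filter.mpr ⟨hD hv, hDA v hv⟩
    have hDsum : ∑ i ∈ (Finset.range t).filter (fun i => ¬ f i ∈ A),
        (if i ∈ D then x i * x (u i) else 0) = ∑ v ∈ D, x v * x (u v) := by
      rw [Finset.sum_ite_mem]
      congr 1
      exact Finset.inter_eq_right.mpr hDsub
    rw [hDsum] at h1
    have h2 : ∑ i ∈ (Finset.range t).filter (fun i => ¬ f i ∈ A), x i * (1 - Y (f i))
        = (1 - S) - ∑ a ∈ Finset.univ.filter (fun a => a ∉ A), (Y a)^2 := by
      have ha : ∑ i ∈ (Finset.range t).filter (fun i => ¬ f i ∈ A), x i * (1 - Y (f i))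
          = ∑ i ∈ (Finset.range t).filter (fun i => ¬ f i ∈ A), x i
            - ∑ i ∈ (Finset.range t).filter (fun i => ¬ f i ∈ A), x i * Y (f i) := by
        rw [← Finset.sum_sub_distrib]
        exact Finset.sum_congr rfl (fun i _ => by ring)
      have hb : ∑ i ∈ (Finset.range t).filter (fun i => ¬ f i ∈ A), x i = 1 - S := by
        have h := Finset.sum_filter_add_sum_filter_not (Finset.range t) (fun i => f i ∈ A) x
        rw [hx1] at h
        rw [hSdef, hRdef] at *
        linarith
      have hc : ∑ i ∈ (Finset.range t).filter (fun i => ¬ f i ∈ A), x i * Y (f i)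
          = ∑ a ∈ Finset.univ.filter (fun a => a ∉ A), (Y a)^2 := by
        rw [← Finset.sum_fiberwise_of_maps_to (g := f)
          (t := Finset.univ.filter (fun a => a ∉ A))
          (fun i hi => Finset.mem_filter.mpr ⟨Finset.mem_univ _,
            (Finset.mem_filter.mp hi).2⟩)]
        refine Finset.sum_congr rfl fun a ha => ?_
        have hfil : ((Finset.range t).filter (fun i => ¬ f i ∈ A)).filter (fun i => f i = a)
            = (Finset.range t).filter (fun i => f i = a) := by
          ext i
          simp only [Finset.mem_filter, Finset.mem_univ, true_and] at ha ⊢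
          constructor
          · rintro ⟨⟨h1, h2⟩, h3⟩; exact ⟨h1, h3⟩
          · rintro ⟨h1, h3⟩; exact ⟨⟨h1, h3 ▸ ha⟩, h3⟩
        rw [hfil]
        have : ∀ i ∈ (Finset.range t).filter (fun i => f i = a), x i * Y (f i) = x i * Y a := by
          intro i hi
          rw [(Finset.mem_filter.mp hi).2]
        rw [Finset.sum_congr rfl this, ← Finset.sum_mul, sq]
      rw [ha, hb, hc]
    linarith
  -- Part R
  have hGRU : Uniform 2 GR := fun e he => hU e (Finset.mem_filter.mp he).1
  have hGRsub : ∀ e ∈ GR, e ⊆ Finset.range t := fun e he => hSub e (Finset.mem_filter.mp he).1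
  have hhand2 := handshake GR hGRU (Finset.range t) hGRsub x
  have hperR : ∀ i ∈ R, x i * ∑ j ∈ Nbr i, x j
      ≤ x i * (1 - S) + x i * ∑ j ∈ NbrR i, x j := by
    intro i hi
    have hsplit2 := Finset.sum_filter_add_sum_filter_not (Nbr i) (fun j => j ∈ R) x
    have h1 : (Nbr i).filter (fun j => j ∈ R) = NbrR i := by
      ext j
      rw [hNbr, hNbrR]
      simp only [Finset.mem_filter]
      constructor
      · rintro ⟨⟨hjt, hjG⟩, hjR⟩
        refine ⟨hjt, Finset.mem_filter.mpr ⟨hjG, ?_⟩⟩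
        intro z hz
        rcases Finset.mem_insert.mp hz with rfl | hz2
        · exact hi
        · rw [Finset.mem_singleton.mp hz2]; exact hjR
      · rintro ⟨hjt, hm⟩
        rw [Finset.mem_filter] at hm
        exact ⟨⟨hjt, hm.1⟩, hm.2 (by simp)⟩
    have h2 : ∑ j ∈ (Nbr i).filter (fun j => ¬ j ∈ R), x j ≤ 1 - S := by
      have hsub3 : (Nbr i).filter (fun j => ¬ j ∈ R) ⊆
          (Finset.range t).filter (fun j => ¬ j ∈ R) := by
        intro j hj
        rw [Finset.mem_filter] at hj ⊢
        exact ⟨(Finset.mem_filter.mp (hNsub i hj.1)).1, hj.2⟩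
      have h4 : ∑ j ∈ (Finset.range t).filter (fun j => ¬ j ∈ R), x j = 1 - S := by
        have h := Finset.sum_filter_add_sum_filter_not (Finset.range t) (fun j => j ∈ R) x
        rw [hx1] at h
        have h5 : (Finset.range t).filter (fun j => j ∈ R) = R := by
          ext j
          simp only [Finset.mem_filter]
          constructor
          · exact fun h => h.2
          · intro hj
            exact ⟨(Finset.mem_filter.mp hj).1, hj⟩
        rw [h5] at h
        rw [hSdef]
        linarith
      calc ∑ j ∈ (Nbr i).filter (fun j => ¬ j ∈ R), x j
          ≤ ∑ j ∈ (Finset.range t).filter (fun j => ¬ j ∈ R), x j :=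
            Finset.sum_le_sum_of_subset_of_nonneg hsub3 (fun j _ _ => hx0 j)
        _ = 1 - S := h4
    calc x i * ∑ j ∈ Nbr i, x j
        = x i * (∑ j ∈ (Nbr i).filter (fun j => j ∈ R), x j
          + ∑ j ∈ (Nbr i).filter (fun j => ¬ j ∈ R), x j) := by rw [hsplit2]
      _ = x i * ∑ j ∈ NbrR i, x j + x i * ∑ j ∈ (Nbr i).filter (fun j => ¬ j ∈ R), x j := by
          rw [h1]; ring
      _ ≤ x i * ∑ j ∈ NbrR i, x j + x i * (1 - S) :=
          add_le_add le_rfl (mul_le_mul_of_nonneg_left h2 (hx0 i))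
      _ = x i * (1 - S) + x i * ∑ j ∈ NbrR i, x j := by ring
  have hRsum : ∑ i ∈ R, x i * ∑ j ∈ Nbr i, x j
      ≤ S * (1 - S) + 2 * ∑ e ∈ GR, ∏ i ∈ e, x i := by
    calc ∑ i ∈ R, x i * ∑ j ∈ Nbr i, x j
        ≤ ∑ i ∈ R, (x i * (1 - S) + x i * ∑ j ∈ NbrR i, x j) := Finset.sum_le_sum hperR
      _ = (1 - S) * ∑ i ∈ R, x i + ∑ i ∈ R, x i * ∑ j ∈ NbrR i, x j := by
          rw [Finset.sum_add_distrib, Finset.mul_sum]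
          congr 1
          exact Finset.sum_congr rfl (fun i _ => by ring)
      _ ≤ (1 - S) * S + ∑ i ∈ Finset.range t, x i * ∑ j ∈ NbrR i, x j := by
          have hRsub : R ⊆ Finset.range t := Finset.filter_subset _ _
          have hterm : ∀ i ∈ Finset.range t, 0 ≤ x i * ∑ j ∈ NbrR i, x j :=
            fun i _ => mul_nonneg (hx0 i) (Finset.sum_nonneg (fun j _ => hx0 j))
          have := Finset.sum_le_sum_of_subset_of_nonneg hRsub
            (fun i hi _ => hterm i hi)
          rw [hSdef]
          linarith
      _ = S * (1 - S) + 2 * ∑ e ∈ GR, ∏ i ∈ e, x i := by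
          rw [hhand2]; ring
  -- combine
  have htotal : ∑ i ∈ Finset.range t, x i * ∑ j ∈ Nbr i, x j
      = ∑ i ∈ R, x i * ∑ j ∈ Nbr i, x j
        + ∑ i ∈ (Finset.range t).filter (fun i => ¬ f i ∈ A), x i * ∑ j ∈ Nbr i, x j := by
    rw [← hsplit, hRdef]
  have hring : S * (1 - S) + (1 - S) = 1 - S^2 := by ring
  calc ∑ i ∈ Finset.range t, x i * ∑ j ∈ Nbr i, x j + ∑ v ∈ D, x v * x (u v)
      ≤ (S * (1 - S) + 2 * ∑ e ∈ GR, ∏ i ∈ e, x i)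
        + (((1 - S) - ∑ a ∈ Finset.univ.filter (fun a => a ∉ A), (Y a)^2)
          - ∑ v ∈ D, x v * x (u v)) + ∑ v ∈ D, x v * x (u v) := by
        rw [htotal]
        linarith
    _ = 1 - S^2 - ∑ a ∈ Finset.univ.filter (fun a => a ∉ A), (Y a)^2
        + 2 * ∑ e ∈ GR, ∏ i ∈ e, x i := by ring


set_option maxHeartbeats 1000000 in
lemma arith2a (M τ δ S YY Q : ℝ) (wc : ℕ) (hM : 2 ≤ M) (hτ : τ = 1/(8*M^3))
    (hδpos : 0 < δ) (hδτ : δ ≤ τ^2/2)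
    (hYY0 : 0 ≤ YY) (hwc : (wc:ℝ) ≤ M - 2)
    (hC : (1-S)^2 ≤ (wc:ℝ) * YY) (hCzero : wc = 0 → (1 - S = 0 ∧ YY = 0))
    (hQ : Q ≤ (M-1)*τ)
    (hineq : 1 - 1/M - δ ≤ 1 - S^2 - YY + 2*Q) : False := by
  have hMpos : (0:ℝ) < M := by linarith
  have hM1 : (1:ℝ) ≤ M - 1 := by linarith
  have hτpos : 0 < τ := by rw [hτ]; positivity
  have hSY : S^2 + YY ≤ 1/M + δ + 2*((M-1)*τ) := by nlinarith
  have hlow : 1/(M-1) ≤ S^2 + YY := by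
    rcases Nat.eq_zero_or_pos wc with h0 | h1
    · obtain ⟨hS1, hYY1⟩ := hCzero h0
      have hS : S = 1 := by linarith
      rw [hS, hYY1, one_pow, add_zero, div_le_one (by linarith)]
      linarith
    · set W : ℝ := (wc : ℝ) with hW
      have hw1' : 1 ≤ wc := h1
      have hw1 : (1:ℝ) ≤ W := by rw [hW]; exact_mod_cast hw1'
      have hWpos : (0:ℝ) < W := by linarith
      have key : W * 1 ≤ W * ((W+1)*(S^2+YY)) := by
        nlinarith [sq_nonneg ((W+1)*S - 1), hC, hYY0, hw1]
      have h2 : (1:ℝ) ≤ (W+1)*(S^2+YY) := le_of_mul_le_mul_left key hWpos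
      have h3 : 1/(W+1) ≤ S^2 + YY := by
        rw [div_le_iff₀ (by linarith)]
        linarith
      have h4 : 1/(M-1) ≤ 1/(W+1) := by
        apply one_div_le_one_div_of_le (by linarith)
        linarith
      linarith
  have h1 : 1/(M-1) - 1/M = 1/(M*(M-1)) := by
    field_simp
    ring
  have h2 : 1/(M*(M-1)) ≤ δ + 2*((M-1)*τ) := by linarith
  have h3 : 1/(M^2) ≤ 1/(M*(M-1)) := by
    apply one_div_le_one_div_of_le (by nlinarith) (by nlinarith)
  have h4 : 2*((M-1)*τ) ≤ (1/4) * (1/M^2) := by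
    rw [hτ]
    rw [show 2*((M-1)*(1/(8*M^3))) = (M-1)/(4*M^3) by field_simp; ring]
    rw [show (1/4) * (1/M^2) = 1/(4*M^2) by ring]
    rw [div_le_div_iff₀ (by positivity) (by positivity)]
    nlinarith
  have h5 : δ ≤ (1/2048) * (1/M^2) := by
    have hτ2 : τ^2 = 1/(64*M^6) := by rw [hτ]; field_simp; ring
    have h6 : 1/(64*M^6) ≤ (1/1024) * (1/M^2) := by
      rw [show (1/1024) * (1/M^2) = 1/(1024*M^2) by ring]
      rw [div_le_div_iff₀ (by positivity) (by positivity)]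
      have hM2 : 4 ≤ M^2 := by nlinarith
      have hM4 : 16 ≤ M^4 := by nlinarith [sq_nonneg (M^2 - 4)]
      have hM6 : 16 * M^2 ≤ M^4 * M^2 := by
        apply mul_le_mul_of_nonneg_right hM4 (sq_nonneg M)
      nlinarith [hM6]
    calc δ ≤ τ^2/2 := hδτ
      _ = (1/(64*M^6))/2 := by rw [hτ2]
      _ ≤ (1/2048) * (1/M^2) := by linarith
  have hu2 : (0:ℝ) < 1/M^2 := by positivity
  linarith

set_option maxHeartbeats 2000000 in
/-- Stability of the Lagrangian for `T`-free graphs, `T` a tree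
satisfying the Erdős–Sós conjecture. -/
theorem stmt_18 (k : ℕ) (hk : 3 ≤ k)
    (T : HG) (hT : IsTreeGraph T k) (hES : SatisfiesES T k)
    (ε : ℝ) (hε0 : 0 < ε) (hε1 : ε < 1) :
    ∃ δ : ℝ, 0 < δ ∧
      ∀ t : ℕ, ∀ G : HG, Uniform 2 G → (∀ e ∈ G, e ⊆ Finset.range t) →
        ¬ IsCopyIn T G →
        ∀ x : ℕ → ℝ, (∀ i, 0 ≤ x i) → (∑ i ∈ Finset.range t, x i) = 1 →
          ((k : ℝ) - 2) / ((k : ℝ) - 1) - δ ≤ pPoly 2 G x →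
          ∃ I : Finset ℕ, I ⊆ Finset.range t ∧ I.card ≤ k - 1 ∧
            1 - ε ≤ ∑ i ∈ I, x i := by
  classical
  set M : ℝ := (k : ℝ) - 1 with hMdef
  have hM : (2 : ℝ) ≤ M := by
    have : (3 : ℝ) ≤ (k : ℝ) := by exact_mod_cast hk
    rw [hMdef]; linarith
  have hMpos : (0 : ℝ) < M := by linarith
  set τ : ℝ := 1 / (8 * M^3) with hτdef
  have hτpos : (0 : ℝ) < τ := by rw [hτdef]; positivity
  set δ : ℝ := ε * τ^2 / 2 with hδdef
  have hδpos : (0 : ℝ) < δ := by rw [hδdef]; positivity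
  have hδτ2 : δ ≤ τ^2 / 2 := by
    rw [hδdef]
    have : ε * τ^2 ≤ 1 * τ^2 := by nlinarith [sq_nonneg τ]
    linarith
  have hδlttau2 : δ < τ^2 := by nlinarith [sq_nonneg τ, hτpos]
  have hM4 : (4:ℝ) ≤ M^2 := by nlinarith
  have hτsmall : τ ≤ 1 / (32 * M) := by
    rw [hτdef, div_le_div_iff₀ (by positivity) (by positivity)]
    nlinarith [mul_le_mul_of_nonneg_left hM4 (by linarith : (0:ℝ) ≤ 8*M)]
  have hcastm : ((k - 1 : ℕ) : ℝ) = M := by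
    rw [Nat.cast_sub (by omega : 1 ≤ k), hMdef]; simp
  have hcastk2 : ((k : ℝ) - 2) = M - 1 := by rw [hMdef]; ring
  refine ⟨δ, hδpos, ?_⟩
  intro t G hU hSub hGfree x hx0 hx1 hpp
  set p : ℝ := ∑ e ∈ G, ∏ i ∈ e, x i with hpdef
  have hp : 1 - 1/M - δ ≤ 2 * p := by
    have h1 : pPoly 2 G x = 2 * p := by
      rw [pPoly, hpdef]; norm_num [Nat.factorial]
    have h2 : ((k : ℝ) - 2) / ((k : ℝ) - 1) = 1 - 1/M := by
      rw [← hMdef, hcastk2]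
      field_simp
    rw [h1, h2] at hpp
    linarith
  -- the coloring
  obtain ⟨f, hf0⟩ := exists_coloring hk hES hU hGfree (Finset.range t)
  have hf : ∀ e ∈ G, ∀ u ∈ e, ∀ v ∈ e, u ≠ v → f u ≠ f v :=
    fun e he => hf0 e he (hSub e he)
  set C : Fin (k-1) → Finset ℕ := fun a => (Finset.range t).filter (fun i => f i = a) with hCdef
  set Y : Fin (k-1) → ℝ := fun a => ∑ i ∈ C a, x i with hYdef
  have hYa : ∀ a, (∑ i ∈ (Finset.range t).filter (fun i => f i = a), x i) = Y a :=
    fun a => rfl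
  have hY0 : ∀ a, 0 ≤ Y a := fun a => Finset.sum_nonneg (fun i _ => hx0 i)
  have hY1 : ∑ a, Y a = 1 := by
    rw [hYdef]
    rw [Finset.sum_fiberwise_of_maps_to (g := f) (fun i _ => Finset.mem_univ (f i)) x]
    exact hx1
  -- master with A = ∅
  have masterE : ∀ (D : Finset ℕ) (uf : ℕ → ℕ), D ⊆ Finset.range t →
      (∀ v ∈ D, uf v ∈ Finset.range t ∧ f (uf v) ≠ f v ∧ ({v, uf v} : Finset ℕ) ∉ G) →
      2 * p + ∑ v ∈ D, x v * x (uf v) ≤ 1 - ∑ a, Y a^2 := by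
    intro D uf hD huf
    have h := master (k-1) G hU t hSub x hx0 hx1 f hf ∅ D hD (by simp) uf huf
    have he1 : (Finset.range t).filter (fun i => f i ∈ (∅ : Finset (Fin (k-1)))) = ∅ := by
      simp
    rw [he1] at h
    have he2 : G.filter (fun e => e ⊆ (∅ : Finset ℕ)) = ∅ := by
      rw [Finset.filter_eq_empty_iff]
      intro e he hsub
      have h2 := hU e he
      rw [Finset.subset_empty.mp hsub] at h2
      simp at h2
    rw [he2] at h
    have he3 : Finset.univ.filter (fun a : Fin (k-1) => a ∉ (∅ : Finset (Fin (k-1))))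
        = Finset.univ := by simp
    rw [he3] at h
    simp only [Finset.sum_empty, hYa] at h
    rw [← hpdef] at h
    linarith
  have hYsq_le : ∑ a, Y a^2 ≤ 1/M + δ := by
    have h := masterE ∅ id (by simp) (by simp)
    simp only [Finset.sum_empty, add_zero] at h
    linarith
  have hYsq_ge : 1/M ≤ ∑ a, Y a^2 := by
    have h := sq_sum_le_card_mul_sum_sq (s := (Finset.univ : Finset (Fin (k-1)))) (f := Y)
    rw [hY1, Finset.card_univ, Fintype.card_fin, one_pow, hcastm] at h
    rw [div_le_iff₀ hMpos]
    nlinarith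
  have hM0 : M ≠ 0 := ne_of_gt hMpos
  have hvar : ∀ a, (Y a - 1/M)^2 ≤ δ := by
    have hsum : ∑ a, (Y a - 1/M)^2 = ∑ a, Y a^2 - 1/M := by
      have expand : ∀ a ∈ (Finset.univ : Finset (Fin (k-1))),
          (Y a - 1/M)^2 = Y a^2 - (2/M)*Y a + (1/M)*(1/M) := fun a _ => by ring
      calc ∑ a, (Y a - 1/M)^2
          = ∑ a, (Y a^2 - (2/M)*Y a + (1/M)*(1/M)) := Finset.sum_congr rfl expand
        _ = ∑ a, Y a^2 - (2/M) * ∑ a, Y a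
            + ((Finset.univ : Finset (Fin (k-1))).card : ℝ) * ((1/M)*(1/M)) := by
            rw [Finset.sum_add_distrib, Finset.sum_sub_distrib, ← Finset.mul_sum,
              Finset.sum_const, nsmul_eq_mul]
        _ = ∑ a, Y a^2 - 1/M := by
            rw [hY1, Finset.card_univ, Fintype.card_fin, hcastm]
            field_simp
            ring
    intro a
    have h2 : (Y a - 1/M)^2 ≤ ∑ b, (Y b - 1/M)^2 :=
      Finset.single_le_sum (f := fun b => (Y b - 1/M)^2) (fun b _ => sq_nonneg _)
        (Finset.mem_univ a)
    rw [hsum] at h2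
    linarith
  -- heavy vertices
  set Heavy : Fin (k-1) → Prop := fun a => ∃ i ∈ C a, τ ≤ x i with hHeavydef
  set w : Fin (k-1) → ℕ := fun a => if h : ∃ i ∈ C a, τ ≤ x i then h.choose else 0 with hwdef
  have hw : ∀ a, Heavy a → w a ∈ C a ∧ τ ≤ x (w a) := by
    intro a ha
    rw [hwdef]
    simp only [dif_pos (show ∃ i ∈ C a, τ ≤ x i from ha)]
    exact ⟨ha.choose_spec.1, ha.choose_spec.2⟩
  have hwC : ∀ a, Heavy a → f (w a) = a ∧ w a ∈ Finset.range t := by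
    intro a ha
    have := (hw a ha).1
    rw [hCdef, Finset.mem_filter] at this
    exact ⟨this.2, this.1⟩
  -- adjacency of heavy representatives
  have hadj : ∀ a b, Heavy a → Heavy b → a ≠ b → ({w a, w b} : Finset ℕ) ∈ G := by
    intro a b ha hb hab
    by_contra hne
    have h := masterE {w a} (fun _ => w b) (by
      intro v hv
      rw [Finset.mem_singleton] at hv
      subst hv
      exact (hwC a ha).2) (by
      intro v hv
      rw [Finset.mem_singleton] at hv
      subst hv
      refine ⟨(hwC b hb).2, ?_, hne⟩
      rw [(hwC b hb).1, (hwC a ha).1]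
      exact hab.symm)
    rw [Finset.sum_singleton] at h
    have h2 : x (w a) * x (w b) ≤ δ := by
      have := hYsq_ge
      linarith
    have h3 : τ * τ ≤ x (w a) * x (w b) :=
      mul_le_mul (hw a ha).2 (hw b hb).2 (le_of_lt hτpos) (hx0 _)
    nlinarith
  -- spread classes
  set AS : Finset (Fin (k-1)) := Finset.univ.filter (fun a => ¬ Heavy a) with hASdef
  rcases Nat.lt_or_ge AS.card 2 with hAS2 | hAS2
  · rcases Nat.eq_zero_or_pos AS.card with hc0 | hc1
    · -- Case 1 : all classes heavy
      have hallheavy : ∀ a, Heavy a := by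
        intro a
        by_contra hna
        have : a ∈ AS := Finset.mem_filter.mpr ⟨Finset.mem_univ a, hna⟩
        rw [Finset.card_eq_zero.mp hc0] at this
        exact absurd this (Finset.notMem_empty a)
      have hwinj : Function.Injective w := by
        intro a b hab
        have h1 := (hwC a (hallheavy a)).1
        have h2 := (hwC b (hallheavy b)).1
        rw [← h1, ← h2, hab]
      set U : Finset ℕ := Finset.univ.image w with hUdef
      have hUsub : U ⊆ Finset.range t := by
        intro v hv
        obtain ⟨a, -, rfl⟩ := Finset.mem_image.mp hv
        exact (hwC a (hallheavy a)).2
      have hescape : ∀ v ∈ Finset.range t, v ∉ U →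
          ∃ b, b ≠ f v ∧ ({v, w b} : Finset ℕ) ∉ G := by
        intro v hvt hvU
        by_contra hcon
        push_neg at hcon
        apply hGfree
        refine embed_lemma hk hT ((Finset.univ.erase (f v)).image w) ?_ ?_ v (w (f v))
          ?_ ?_ ?_ ?_ ?_
        · rw [Finset.card_image_of_injective _ hwinj,
            Finset.card_erase_of_mem (Finset.mem_univ _), Finset.card_univ, Fintype.card_fin]
          omega
        · intro w1 hw1 w2 hw2 hne
          obtain ⟨a, ha, rfl⟩ := Finset.mem_image.mp hw1
          obtain ⟨b, hb, rfl⟩ := Finset.mem_image.mp hw2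
          exact hadj a b (hallheavy a) (hallheavy b) (fun h => hne (by rw [h]))
        · intro h
          exact hvU (Finset.image_subset_image (Finset.erase_subset _ _) h)
        · intro h
          obtain ⟨a, ha, heq⟩ := Finset.mem_image.mp h
          exact (Finset.mem_erase.mp ha).1 (hwinj heq)
        · intro h
          exact hvU (h ▸ Finset.mem_image_of_mem w (Finset.mem_univ (f v)))
        · intro ww hww
          obtain ⟨b, hb, rfl⟩ := Finset.mem_image.mp hww
          exact hcon b (Finset.mem_erase.mp hb).1
        · intro ww hww
          obtain ⟨b, hb, rfl⟩ := Finset.mem_image.mp hww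
          exact hadj (f v) b (hallheavy _) (hallheavy _) (Ne.symm (Finset.mem_erase.mp hb).1)
      set D : Finset ℕ := Finset.range t \ U with hDdef
      set uf : ℕ → ℕ :=
        fun v => if h : ∃ b, b ≠ f v ∧ ({v, w b} : Finset ℕ) ∉ G then w h.choose else 0
        with hufdef
      have hDmem : ∀ v ∈ D, v ∈ Finset.range t ∧ v ∉ U := by
        intro v hv
        rw [hDdef, Finset.mem_sdiff] at hv
        exact hv
      have hufspec : ∀ v ∈ D, uf v ∈ Finset.range t ∧ f (uf v) ≠ f v ∧
          ({v, uf v} : Finset ℕ) ∉ G := by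
        intro v hv
        obtain ⟨hv1, hv2⟩ := hDmem v hv
        have hex : ∃ b, b ≠ f v ∧ ({v, w b} : Finset ℕ) ∉ G := hescape v hv1 hv2
        rw [hufdef]
        simp only [dif_pos hex]
        obtain ⟨hb1, hb2⟩ := hex.choose_spec
        refine ⟨(hwC _ (hallheavy _)).2, ?_, hb2⟩
        rw [(hwC _ (hallheavy _)).1]
        exact hb1
      have hufheavy : ∀ v ∈ D, τ ≤ x (uf v) := by
        intro v hv
        obtain ⟨hv1, hv2⟩ := hDmem v hv
        have hex : ∃ b, b ≠ f v ∧ ({v, w b} : Finset ℕ) ∉ G := hescape v hv1 hv2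
        rw [hufdef]
        simp only [dif_pos hex]
        exact (hw _ (hallheavy _)).2
      have hmain := masterE D uf Finset.sdiff_subset hufspec
      have hDsum : ∑ v ∈ D, x v ≤ δ / τ := by
        rw [le_div_iff₀ hτpos]
        calc (∑ v ∈ D, x v) * τ = ∑ v ∈ D, x v * τ := by rw [Finset.sum_mul]
          _ ≤ ∑ v ∈ D, x v * x (uf v) :=
              Finset.sum_le_sum (fun v hv =>
                mul_le_mul_of_nonneg_left (hufheavy v hv) (hx0 v))
          _ ≤ δ := by linarith [hYsq_ge, hp]
      refine ⟨U, hUsub, ?_, ?_⟩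
      · calc U.card ≤ (Finset.univ : Finset (Fin (k-1))).card := Finset.card_image_le
          _ = k - 1 := by rw [Finset.card_univ, Fintype.card_fin]
      · have hsd : ∑ v ∈ D, x v + ∑ v ∈ U, x v = 1 := by
          rw [hDdef, Finset.sum_sdiff hUsub]
          exact hx1
        have hτ1 : τ ≤ 1 := by
          rw [hτdef]
          rw [div_le_one (by positivity)]
          nlinarith
        have hδτε : δ / τ ≤ ε := by
          rw [div_le_iff₀ hτpos, hδdef]
          nlinarith
        linarith
    · -- Case 2b : exactly one spread class
      have hc1' : AS.card = 1 := by omega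
      exfalso
      obtain ⟨a₀, hAS1⟩ := Finset.card_eq_one.mp hc1'
      have ha₀AS : a₀ ∈ AS := by rw [hAS1]; exact Finset.mem_singleton_self a₀
      have hnh : ¬ Heavy a₀ := (Finset.mem_filter.mp ha₀AS).2
      have hspread : ∀ i ∈ C a₀, x i < τ := by
        intro i hi
        by_contra hge
        push_neg at hge
        exact hnh ⟨i, hi, hge⟩
      have hheavy : ∀ b, b ≠ a₀ → Heavy b := by
        intro b hb
        by_contra hnb
        have : b ∈ AS := Finset.mem_filter.mpr ⟨Finset.mem_univ _, hnb⟩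
        rw [hAS1, Finset.mem_singleton] at this
        exact hb this
      have hwinj2 : ∀ b c, b ≠ a₀ → c ≠ a₀ → w b = w c → b = c := by
        intro b c hb hc h
        have h1 := (hwC b (hheavy b hb)).1
        have h2 := (hwC c (hheavy c hc)).1
        rw [← h1, ← h2, h]
      set Esc : Finset ℕ := (C a₀).filter
        (fun v => ∀ b, b ≠ a₀ → ({v, w b} : Finset ℕ) ∈ G) with hEscdef
      have hEscsub : Esc ⊆ C a₀ := Finset.filter_subset _ _
      have hEsc1 : Esc.card ≤ 1 := by
        by_contra hgt
        push_neg at hgt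
        obtain ⟨v, hv, v', hv', hvv⟩ := Finset.one_lt_card.mp hgt
        apply hGfree
        have hvC := (Finset.mem_filter.mp hv).1
        have hv'C := (Finset.mem_filter.mp hv').1
        have hva : f v = a₀ := (Finset.mem_filter.mp hvC).2
        have hv'a : f v' = a₀ := (Finset.mem_filter.mp hv'C).2
        refine embed_lemma hk hT ((Finset.univ.erase a₀).image w) ?_ ?_ v v' ?_ ?_ hvv ?_ ?_
        · rw [Finset.card_image_of_injOn (fun b hb c hc h =>
            hwinj2 b c (Finset.mem_erase.mp (Finset.mem_coe.mp hb)).1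
              (Finset.mem_erase.mp (Finset.mem_coe.mp hc)).1 h),
            Finset.card_erase_of_mem (Finset.mem_univ _), Finset.card_univ, Fintype.card_fin]
          omega
        · intro w1 hw1 w2 hw2 hne
          obtain ⟨b, hb, rfl⟩ := Finset.mem_image.mp hw1
          obtain ⟨c, hc, rfl⟩ := Finset.mem_image.mp hw2
          have hbne := (Finset.mem_erase.mp hb).1
          have hcne := (Finset.mem_erase.mp hc).1
          exact hadj b c (hheavy b hbne) (hheavy c hcne) (fun h => hne (by rw [h]))
        · intro h
          obtain ⟨b, hb, heq⟩ := Finset.mem_image.mp h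
          have hbne := (Finset.mem_erase.mp hb).1
          have hfb := (hwC b (hheavy b hbne)).1
          rw [heq, hva] at hfb
          exact hbne hfb.symm
        · intro h
          obtain ⟨b, hb, heq⟩ := Finset.mem_image.mp h
          have hbne := (Finset.mem_erase.mp hb).1
          have hfb := (hwC b (hheavy b hbne)).1
          rw [heq, hv'a] at hfb
          exact hbne hfb.symm
        · intro ww hww
          obtain ⟨b, hb, rfl⟩ := Finset.mem_image.mp hww
          exact (Finset.mem_filter.mp hv).2 b (Finset.mem_erase.mp hb).1
        · intro ww hww
          obtain ⟨b, hb, rfl⟩ := Finset.mem_image.mp hww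
          exact (Finset.mem_filter.mp hv').2 b (Finset.mem_erase.mp hb).1
      set D2 : Finset ℕ := C a₀ \ Esc with hD2def
      set uf2 : ℕ → ℕ := fun v =>
        if h : ∃ b, b ≠ a₀ ∧ ({v, w b} : Finset ℕ) ∉ G then w h.choose else 0 with huf2def
      have hCsub : C a₀ ⊆ Finset.range t := Finset.filter_subset _ _
      have hD2mem : ∀ v ∈ D2, v ∈ C a₀ ∧ ∃ b, b ≠ a₀ ∧ ({v, w b} : Finset ℕ) ∉ G := by
        intro v hv
        rw [hD2def, Finset.mem_sdiff] at hv
        refine ⟨hv.1, ?_⟩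
        have hne := hv.2
        rw [hEscdef, Finset.mem_filter] at hne
        push_neg at hne
        exact hne hv.1
      have huf2spec : ∀ v ∈ D2, uf2 v ∈ Finset.range t ∧ f (uf2 v) ≠ f v ∧
          ({v, uf2 v} : Finset ℕ) ∉ G := by
        intro v hv
        obtain ⟨hvC, hex⟩ := hD2mem v hv
        have hfv : f v = a₀ := (Finset.mem_filter.mp hvC).2
        rw [huf2def]
        simp only [dif_pos hex]
        obtain ⟨hb1, hb2⟩ := hex.choose_spec
        refine ⟨(hwC _ (hheavy _ hb1)).2, ?_, hb2⟩
        rw [(hwC _ (hheavy _ hb1)).1, hfv]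
        exact hb1
      have huf2heavy : ∀ v ∈ D2, τ ≤ x (uf2 v) := by
        intro v hv
        obtain ⟨hvC, hex⟩ := hD2mem v hv
        rw [huf2def]
        simp only [dif_pos hex]
        exact (hw _ (hheavy _ hex.choose_spec.1)).2
      have hmain := masterE D2 uf2 (fun v hv => hCsub (hD2mem v hv).1) huf2spec
      have hD2sum : ∑ v ∈ D2, x v ≤ δ / τ := by
        rw [le_div_iff₀ hτpos]
        calc (∑ v ∈ D2, x v) * τ = ∑ v ∈ D2, x v * τ := by rw [Finset.sum_mul]
          _ ≤ ∑ v ∈ D2, x v * x (uf2 v) :=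
              Finset.sum_le_sum (fun v hv =>
                mul_le_mul_of_nonneg_left (huf2heavy v hv) (hx0 v))
          _ ≤ δ := by linarith [hYsq_ge, hp]
      have hEscsum : ∑ v ∈ Esc, x v ≤ τ := by
        rcases Nat.le_one_iff_eq_zero_or_eq_one.mp hEsc1 with h0 | h1
        · rw [Finset.card_eq_zero.mp h0, Finset.sum_empty]
          exact le_of_lt hτpos
        · obtain ⟨v, hveq⟩ := Finset.card_eq_one.mp h1
          have hvE : v ∈ Esc := by rw [hveq]; exact Finset.mem_singleton_self v
          rw [hveq, Finset.sum_singleton]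
          exact le_of_lt (hspread v (hEscsub hvE))
      have hYa₀ : Y a₀ ≤ τ + δ / τ := by
        have hsd : ∑ v ∈ D2, x v + ∑ v ∈ Esc, x v = Y a₀ := by
          rw [hD2def]
          exact Finset.sum_sdiff hEscsub
        linarith
      -- numeric contradiction
      have hv := hvar a₀
      have hu : (0:ℝ) < 1/M := by positivity
      have hδττ : δ/τ ≤ τ/2 := by
        rw [div_le_iff₀ hτpos]
        nlinarith
      have hconv : 1/(32*M) = (1/32)*(1/M) := by field_simp
      have h4 : Y a₀ ≤ (3/64) * (1/M) := by
        rw [hconv] at hτsmall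
        linarith
      have h5 : (1/2) * (1/M) ≤ 1/M - Y a₀ := by linarith
      have h6 : ((1/2)*(1/M))^2 ≤ (Y a₀ - 1/M)^2 := by
        have habs : (Y a₀ - 1/M)^2 = (1/M - Y a₀)^2 := by ring
        rw [habs]
        exact pow_le_pow_left₀ (by positivity) h5 2
      have h7 : τ^2 ≤ ((1/32)*(1/M))^2 := by
        apply pow_le_pow_left₀ (le_of_lt hτpos)
        rw [← hconv]
        exact hτsmall
      nlinarith [pow_pos hu 2]
  · -- Case 2a: at least two spread classes, contradiction
    exfalso
    have hmaster := master (k-1) G hU t hSub x hx0 hx1 f hf AS ∅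
      (Finset.empty_subset _) (fun v hv => absurd hv (Finset.notMem_empty v)) id
      (fun v hv => absurd hv (Finset.notMem_empty v))
    simp only [Finset.sum_empty, add_zero, hYa] at hmaster
    rw [← hpdef] at hmaster
    set R : Finset ℕ := (Finset.range t).filter (fun i => f i ∈ AS) with hRdef
    set GR : HG := G.filter (fun e => e ⊆ R) with hGRdef
    set S : ℝ := ∑ i ∈ R, x i with hSdef
    set YY : ℝ := ∑ a ∈ Finset.univ.filter (fun a => a ∉ AS), Y a ^ 2 with hYYdef
    set Q : ℝ := ∑ e ∈ GR, ∏ i ∈ e, x i with hQdef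
    have hineq : 1 - 1/M - δ ≤ 1 - S^2 - YY + 2*Q := by linarith
    have hYY0 : 0 ≤ YY := by
      rw [hYYdef]
      exact Finset.sum_nonneg (fun a _ => sq_nonneg _)
    -- bound on Q
    have hGRU : Uniform 2 GR := fun e he => hU e (Finset.mem_filter.mp he).1
    have hGRfree : ¬ IsCopyIn T GR := fun hc => hGfree (copy_mono (Finset.filter_subset _ _) hc)
    have hGRsmall : ∀ i ∈ hverts GR, x i ≤ τ := by
      intro i hi
      obtain ⟨e, he, hie⟩ := mem_hverts.mp hi
      have hiR : i ∈ R := (Finset.mem_filter.mp he).2 hie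
      rw [hRdef, Finset.mem_filter] at hiR
      have hnh2 : ¬ Heavy (f i) := (Finset.mem_filter.mp hiR.2).2
      by_contra hgt
      push_neg at hgt
      exact hnh2 ⟨i, Finset.mem_filter.mpr ⟨hiR.1, rfl⟩, le_of_lt hgt⟩
    have hQb : Q ≤ (M-1)*τ := by
      have h1 := smallmax hk hES τ (le_of_lt hτpos) x hx0 GR hGRU hGRfree hGRsmall
      rw [hcastk2] at h1
      have h2 : ∑ i ∈ hverts GR, x i ≤ 1 := by
        rw [← hx1]
        apply Finset.sum_le_sum_of_subset_of_nonneg _ (fun i _ _ => hx0 i)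
        intro i hi
        obtain ⟨e, he, hie⟩ := mem_hverts.mp hi
        exact hSub e (Finset.mem_filter.mp he).1 hie
      have h3 : (M-1) * τ * ∑ i ∈ hverts GR, x i ≤ (M-1) * τ * 1 := by
        apply mul_le_mul_of_nonneg_left h2
        exact mul_nonneg (by linarith) (le_of_lt hτpos)
      rw [hQdef]
      calc ∑ e ∈ GR, ∏ i ∈ e, x i ≤ (M-1) * τ * ∑ i ∈ hverts GR, x i := h1
        _ ≤ (M-1) * τ * 1 := h3
        _ = (M-1) * τ := by ring
    -- Cauchy--Schwarz data
    have hYsum' : ∑ a ∈ Finset.univ.filter (fun a => a ∉ AS), Y a = 1 - S := by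
      have hsplit := Finset.sum_filter_add_sum_filter_not (Finset.univ : Finset (Fin (k-1)))
        (fun a => a ∈ AS) Y
      rw [hY1] at hsplit
      have hfib := Finset.sum_fiberwise_of_maps_to (s := R)
        (t := Finset.univ.filter (fun a : Fin (k-1) => a ∈ AS)) (g := f)
        (fun i hi => Finset.mem_filter.mpr ⟨Finset.mem_univ _,
          (Finset.mem_filter.mp hi).2⟩) x
      have hinner : ∀ a ∈ Finset.univ.filter (fun a : Fin (k-1) => a ∈ AS),
          ∑ i ∈ R.filter (fun i => f i = a), x i = Y a := by
        intro a ha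
        rw [← hYa a]
        congr 1
        ext i
        rw [hRdef]
        simp only [Finset.mem_filter]
        constructor
        · rintro ⟨⟨h1, h2⟩, h3⟩
          exact ⟨h1, h3⟩
        · rintro ⟨h1, h3⟩
          refine ⟨⟨h1, ?_⟩, h3⟩
          rw [h3]
          exact (Finset.mem_filter.mp ha).2
      rw [Finset.sum_congr rfl hinner] at hfib
      rw [← hSdef] at hfib
      linarith
    have hsq := sq_sum_le_card_mul_sum_sq
      (s := Finset.univ.filter (fun a : Fin (k-1) => a ∉ AS)) (f := Y)
    rw [hYsum', ← hYYdef] at hsq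
    have hCzero : (Finset.univ.filter (fun a : Fin (k-1) => a ∉ AS)).card = 0 →
        (1 - S = 0 ∧ YY = 0) := by
      intro h0
      have hempt := Finset.card_eq_zero.mp h0
      constructor
      · rw [← hYsum', hempt, Finset.sum_empty]
      · rw [hYYdef, hempt, Finset.sum_empty]
    have hwc : (((Finset.univ.filter (fun a : Fin (k-1) => a ∉ AS)).card : ℕ) : ℝ) ≤ M - 2 := by
      have hsd : Finset.univ.filter (fun a : Fin (k-1) => a ∉ AS) = Finset.univ \ AS := by
        ext a
        simp
      have hASle : AS.card ≤ k - 1 := by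
        calc AS.card ≤ (Finset.univ : Finset (Fin (k-1))).card := Finset.card_le_univ AS
          _ = k - 1 := by rw [Finset.card_univ, Fintype.card_fin]
      rw [hsd, Finset.card_sdiff_of_subset (Finset.subset_univ _), Finset.card_univ, Fintype.card_fin]
      rw [Nat.cast_sub hASle, hcastm]
      have : (2:ℝ) ≤ (AS.card : ℝ) := by exact_mod_cast hAS2
      linarith
    exact arith2a M τ δ S YY Q _ hM hτdef hδpos hδτ2 hYY0 hwc hsq hCzero hQb hineq
end
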